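/- arXiv:2410.21927 — 4 statements merged into one kernel-verified Lean document; each statement's English description precedes it below -/
import Mathlib

section
/- Maximum Principle: Under the standing assumptions, if u ∈ L²(Ω_m,ν) satisfies −Δ_m u(x) ≤ 0 for ν-a.e. x ∈ Ω and u ≤ 0 ν-a.e. on ∂_mΩ, then u ≤ 0 ν-a.e. in Ω_m. -/
open MeasureTheory Set

/-- The `m`-boundary of a set `Ω`. -/
def mBoundary {X : Type*} [MeasurableSpace X] (m : X → MeasureTheory.Measure X)
    (Ω : Set X) : Set X :=
  {x | x ∉ Ω ∧ 0 < m x Ω}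

/-- The `m`-closure of a set `Ω`. -/
def mClosure {X : Type*} [MeasurableSpace X] (m : X → MeasureTheory.Measure X)
    (Ω : Set X) : Set X :=
  Ω ∪ mBoundary m Ω

/-- The nonlocal `m`-Laplacian. -/
noncomputable def deltaM {X : Type*} [MeasurableSpace X] (m : X → MeasureTheory.Measure X)
    (u : X → ℝ) (x : X) : ℝ :=
  ∫ y, (u y - u x) ∂(m x)

/-- `m` is a random walk: each `m x` is a probability measure and `x ↦ m x A` is measurable. -/
def IsRandomWalk {X : Type*} [MeasurableSpace X] (m : X → MeasureTheory.Measure X) : Prop :=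
  (∀ x, IsProbabilityMeasure (m x)) ∧
    ∀ A : Set X, MeasurableSet A → Measurable fun x => m x A

/-- `ν` is reversible with respect to the random walk `m`. -/
def Reversible {X : Type*} [MeasurableSpace X] (m : X → MeasureTheory.Measure X)
    (ν : MeasureTheory.Measure X) : Prop :=
  ∀ F : X → X → ℝ, Measurable (Function.uncurry F) → (∃ C, ∀ x y, |F x y| ≤ C) →
    ∫ x, (∫ y, F x y ∂(m x)) ∂ν = ∫ x, (∫ y, F y x ∂(m x)) ∂ν

/-- `Ω` is `m`-connected with respect to `ν`. -/
def mConnected {X : Type*} [MeasurableSpace X] (m : X → MeasureTheory.Measure X)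
    (ν : MeasureTheory.Measure X) (Ω : Set X) : Prop :=
  ∀ A B : Set X, MeasurableSet A → MeasurableSet B → A ⊆ Ω → B ⊆ Ω → A ∪ B = Ω →
    ν A ≠ 0 → ν B ≠ 0 → 0 < ∫ x in A, (m x B).toReal ∂ν

/-- Membership in `L²₀(Ω_m, ν)`: square integrable on `Ω_m`, vanishing `ν`-a.e. on the
`m`-boundary, extended by `0` outside `Ω_m`. -/
def MemL20 {X : Type*} [MeasurableSpace X] (m : X → MeasureTheory.Measure X)
    (ν : MeasureTheory.Measure X) (Ω : Set X) (u : X → ℝ) : Prop :=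
  Measurable u ∧ MeasureTheory.MemLp u 2 (ν.restrict (mClosure m Ω)) ∧
    (∀ᵐ x ∂(ν.restrict (mBoundary m Ω)), u x = 0) ∧ ∀ x ∉ mClosure m Ω, u x = 0

/-- The nonlocal Dirichlet energy `(1/2)∬_{Ω_m×Ω_m} |u(y)-u(x)|² dm_x(y) dν(x)`. -/
noncomputable def gradEnergy {X : Type*} [MeasurableSpace X] (m : X → MeasureTheory.Measure X)
    (ν : MeasureTheory.Measure X) (Ω : Set X) (u : X → ℝ) : ℝ :=
  (1 / 2) * ∫ x in mClosure m Ω, (∫ y in mClosure m Ω, (u y - u x) ^ 2 ∂(m x)) ∂ν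

/-- The standing assumptions of the paper: reversible random walk space, `Ω` `m`-connected with
`0 < ν(Ω) < ν(Ω_m) < ∞`, a 2-Poincaré inequality with first eigenvalue `lam = λ_m(Ω)` attained
by an eigenfunction `φ` with `0 < α ≤ φ ≤ M` a.e. on `Ω` and `φ = 0` on `∂_mΩ`. -/
structure Standing {X : Type*} [MeasurableSpace X] (m : X → MeasureTheory.Measure X)
    (ν : MeasureTheory.Measure X) (Ω : Set X) (lam : ℝ) (φ : X → ℝ) (α M : ℝ) : Prop where
  hrw : IsRandomWalk m
  hrev : Reversible m ν
  hsigma : MeasureTheory.SigmaFinite ν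
  hmeasΩ : MeasurableSet Ω
  hconn : mConnected m ν Ω
  hpos : 0 < ν Ω
  hlt : ν Ω < ν (mClosure m Ω)
  hfin : ν (mClosure m Ω) < ⊤
  hlamPos : 0 < lam
  hpoincare : ∀ u : X → ℝ, MemL20 m ν Ω u →
    lam * ∫ x in Ω, u x ^ 2 ∂ν ≤ gradEnergy m ν Ω u
  hphiMem : MemL20 m ν Ω φ
  heig : ∀ᵐ x ∂(ν.restrict Ω), -(deltaM m φ x) = lam * φ x
  halphaPos : 0 < α
  halphaM : α ≤ M
  hphiLB : ∀ᵐ x ∂(ν.restrict Ω), α ≤ φ x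
  hphiUB : ∀ᵐ x ∂(ν.restrict Ω), φ x ≤ M

/-- Essential boundedness on a set `S` with respect to `ν`. -/
def IsBdd {X : Type*} [MeasurableSpace X] (ν : MeasureTheory.Measure X) (S : Set X)
    (u : X → ℝ) : Prop :=
  ∃ C : ℝ, ∀ᵐ x ∂(ν.restrict S), |u x| ≤ C

/-- A (nonnegative) solution of the Gelfand-type problem `(P(λ f))`. -/
def IsSol {X : Type*} [MeasurableSpace X] (m : X → MeasureTheory.Measure X)
    (ν : MeasureTheory.Measure X) (Ω : Set X) (lam : ℝ) (f : ℝ → ℝ) (u : X → ℝ) : Prop :=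
  MemL20 m ν Ω u ∧ (∀ᵐ x ∂(ν.restrict (mClosure m Ω)), 0 ≤ u x) ∧
    ∀ᵐ x ∂(ν.restrict Ω), -(deltaM m u x) = lam * f (u x)

/-- A solution of `(P(λ f))` without a sign constraint. -/
def IsSolNS {X : Type*} [MeasurableSpace X] (m : X → MeasureTheory.Measure X)
    (ν : MeasureTheory.Measure X) (Ω : Set X) (lam : ℝ) (f : ℝ → ℝ) (u : X → ℝ) : Prop :=
  MemL20 m ν Ω u ∧ ∀ᵐ x ∂(ν.restrict Ω), -(deltaM m u x) = lam * f (u x)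

/-- A minimal solution of `(P(λ f))`. -/
def IsMinimalSol {X : Type*} [MeasurableSpace X] (m : X → MeasureTheory.Measure X)
    (ν : MeasureTheory.Measure X) (Ω : Set X) (lam : ℝ) (f : ℝ → ℝ) (u : X → ℝ) : Prop :=
  IsSol m ν Ω lam f u ∧
    ∀ v : X → ℝ, IsSol m ν Ω lam f v → ∀ᵐ x ∂(ν.restrict (mClosure m Ω)), u x ≤ v x

/-- The extremal parameter `λ*`. -/
noncomputable def lamStar {X : Type*} [MeasurableSpace X] (m : X → MeasureTheory.Measure X)
    (ν : MeasureTheory.Measure X) (Ω : Set X) (f : ℝ → ℝ) : ℝ :=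
  sSup {lam : ℝ | 0 ≤ lam ∧ ∃ u : X → ℝ, IsSol m ν Ω lam f u ∧ IsBdd ν (mClosure m Ω) u}

/-- Hypotheses (H) on the nonlinearity `f` with constant `c₁`. -/
def HypH (f : ℝ → ℝ) (c₁ : ℝ) : Prop :=
  ContinuousOn f (Set.Ici 0) ∧ MonotoneOn f (Set.Ici 0) ∧ 0 < f 0 ∧ 0 < c₁ ∧
    ∀ s : ℝ, 0 ≤ s → c₁ * s ≤ f s

/-- The stability quadratic form `Q_u(v)` with linearized potential `fp ∘ u` (where `fp = f'`). -/
noncomputable def Qform {X : Type*} [MeasurableSpace X] (m : X → MeasureTheory.Measure X)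
    (ν : MeasureTheory.Measure X) (Ω : Set X) (lam : ℝ) (fp : ℝ → ℝ) (u v : X → ℝ) : ℝ :=
  gradEnergy m ν Ω v - lam * ∫ x in Ω, fp (u x) * v x ^ 2 ∂ν

/-- Stability of a solution: `Q_u(v) ≥ 0` for all test functions `v ∈ L^∞ ∩ L²₀`. -/
def IsStable {X : Type*} [MeasurableSpace X] (m : X → MeasureTheory.Measure X)
    (ν : MeasureTheory.Measure X) (Ω : Set X) (lam : ℝ) (fp : ℝ → ℝ) (u : X → ℝ) : Prop :=
  ∀ v : X → ℝ, MemL20 m ν Ω v → IsBdd ν (mClosure m Ω) v → 0 ≤ Qform m ν Ω lam fp u v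

/-- The first eigenvalue `μ₁(u)` of the linearized operator, as an infimum of `Q_u` over
normalized test functions. -/
noncomputable def mu1 {X : Type*} [MeasurableSpace X] (m : X → MeasureTheory.Measure X)
    (ν : MeasureTheory.Measure X) (Ω : Set X) (lam : ℝ) (fp : ℝ → ℝ) (u : X → ℝ) : ℝ :=
  sInf {r : ℝ | ∃ v : X → ℝ, MemL20 m ν Ω v ∧ (∫ x in Ω, v x ^ 2 ∂ν) = 1 ∧
    r = Qform m ν Ω lam fp u v}

section MaxPrincipleAux

open ProbabilityTheory

variable {X : Type*} [MeasurableSpace X]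

/-- Swap invariance of `ν ⊗ₘ κ` from reversibility on finite-measure rectangles. -/
lemma swap_invariant_aux (κ : Kernel X X) [IsMarkovKernel κ] (ν : Measure X) [SigmaFinite ν]
    (hrev : ∀ A B : Set X, MeasurableSet A → MeasurableSet B → ν A < ⊤ → ν B < ⊤ →
      ∫⁻ x in A, κ x B ∂ν = ∫⁻ x in B, κ x A ∂ν) :
    (ν ⊗ₘ κ).map Prod.swap = ν ⊗ₘ κ := by
  set C : Set (Set X) := {A | MeasurableSet A ∧ ν A < ⊤} with hC
  have hCspan : IsCountablySpanning C :=
    ⟨spanningSets ν, fun n => ⟨measurableSet_spanningSets ν n, measure_spanningSets_lt_top ν n⟩,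
      iUnion_spanningSets ν⟩
  have hCgen : MeasurableSpace.generateFrom C = ‹MeasurableSpace X› := by
    refine le_antisymm (MeasurableSpace.generateFrom_le fun s hs => hs.1) fun s hs => ?_
    have : s = ⋃ n, s ∩ spanningSets ν n := by
      rw [← inter_iUnion, iUnion_spanningSets, inter_univ]
    rw [this]
    exact MeasurableSet.iUnion fun n => MeasurableSpace.measurableSet_generateFrom
      ⟨hs.inter (measurableSet_spanningSets ν n),
        lt_of_le_of_lt (measure_mono inter_subset_right) (measure_spanningSets_lt_top ν n)⟩
  have hCpi : IsPiSystem C := fun s hs t ht _ =>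
    ⟨hs.1.inter ht.1, lt_of_le_of_lt (measure_mono inter_subset_left) hs.2⟩
  have hgen : MeasurableSpace.generateFrom (image2 (· ×ˢ ·) C C) = Prod.instMeasurableSpace :=
    generateFrom_eq_prod hCgen hCgen hCspan hCspan
  have hspan : ((ν ⊗ₘ κ).map Prod.swap).FiniteSpanningSetsIn (image2 (· ×ˢ ·) C C) := by
    refine ⟨fun n => spanningSets ν n ×ˢ spanningSets ν n,
      fun n => mem_image2_of_mem ⟨measurableSet_spanningSets ν n, measure_spanningSets_lt_top ν n⟩
        ⟨measurableSet_spanningSets ν n, measure_spanningSets_lt_top ν n⟩, fun n => ?_, ?_⟩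
    · have hmeas : MeasurableSet (spanningSets ν n ×ˢ spanningSets ν n) :=
        (measurableSet_spanningSets ν n).prod (measurableSet_spanningSets ν n)
      rw [Measure.map_apply measurable_swap hmeas]
      have heq : Prod.swap ⁻¹' (spanningSets ν n ×ˢ spanningSets ν n)
          = spanningSets ν n ×ˢ spanningSets ν n := by ext p; simp [and_comm]
      rw [heq, Measure.compProd_apply_prod (measurableSet_spanningSets ν n)
        (measurableSet_spanningSets ν n)]
      calc ∫⁻ x in spanningSets ν n, κ x (spanningSets ν n) ∂ν
          ≤ ∫⁻ _ in spanningSets ν n, 1 ∂ν :=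
            setLIntegral_mono' (measurableSet_spanningSets ν n) fun x _ => prob_le_one
        _ < ⊤ := by rw [setLIntegral_one]; exact measure_spanningSets_lt_top ν n
    · ext p
      simp only [mem_iUnion, mem_prod, mem_univ, iff_true]
      rcases mem_iUnion.1 (show p.1 ∈ ⋃ n, spanningSets ν n by
        rw [iUnion_spanningSets]; exact mem_univ p.1) with ⟨i, hi⟩
      rcases mem_iUnion.1 (show p.2 ∈ ⋃ n, spanningSets ν n by
        rw [iUnion_spanningSets]; exact mem_univ p.2) with ⟨j, hj⟩
      exact ⟨max i j, monotone_spanningSets ν (le_max_left i j) hi,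
        monotone_spanningSets ν (le_max_right i j) hj⟩
  refine hspan.ext hgen.symm (hCpi.prod hCpi) ?_
  rintro _ ⟨A, ⟨hA, hAfin⟩, B, ⟨hB, hBfin⟩, rfl⟩
  rw [Measure.map_apply measurable_swap (hA.prod hB)]
  have heq : Prod.swap ⁻¹' (A ×ˢ B) = B ×ˢ A := by ext p; simp [and_comm]
  rw [heq, Measure.compProd_apply_prod hB hA, Measure.compProd_apply_prod hA hB]
  exact hrev B A hB hA hBfin hAfin

end MaxPrincipleAux


open ProbabilityTheory in
/-- **Maximum Principle**: under the standing assumptions, if `u ∈ L²(Ω_m, ν)` satisfies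
`−Δ_m u ≤ 0` `ν`-a.e. in `Ω` and `u ≤ 0` `ν`-a.e. on `∂_mΩ`, then `u ≤ 0` `ν`-a.e. in `Ω_m`. -/
theorem maximum_principle
    {X : Type*} [MeasurableSpace X] [MeasurableSpace.CountablyGenerated X]
    (m : X → MeasureTheory.Measure X) (ν : MeasureTheory.Measure X)
    (Ω : Set X) (lam : ℝ) (φ : X → ℝ) (α M : ℝ)
    (hst : Standing m ν Ω lam φ α M)
    (u : X → ℝ) (hu : Measurable u)
    (huL2 : MeasureTheory.MemLp u 2 (ν.restrict (mClosure m Ω)))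
    (hu0 : ∀ x ∉ mClosure m Ω, u x = 0)
    (hsub : ∀ᵐ x ∂(ν.restrict Ω), -(deltaM m u x) ≤ 0)
    (hbdry : ∀ᵐ x ∂(ν.restrict (mBoundary m Ω)), u x ≤ 0) :
    ∀ᵐ x ∂(ν.restrict (mClosure m Ω)), u x ≤ 0 := by
  classical
  obtain ⟨hprob, hmeasm⟩ := hst.hrw
  haveI := hst.hsigma
  set κ : ProbabilityTheory.Kernel X X :=
    ⟨m, MeasureTheory.Measure.measurable_of_measurable_coe m hmeasm⟩ with hκdef
  haveI : ProbabilityTheory.IsMarkovKernel κ := ⟨fun x => hprob x⟩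
  have hκ : ∀ x, κ x = m x := fun _ => rfl
  have hΩ : MeasurableSet Ω := hst.hmeasΩ
  have hBmeas : MeasurableSet (mBoundary m Ω) := by
    have h1 : Measurable fun x => m x Ω := hmeasm Ω hΩ
    have h2 : mBoundary m Ω = Ωᶜ ∩ {x | 0 < m x Ω} := rfl
    rw [h2]
    exact hΩ.compl.inter (measurableSet_lt measurable_const h1)
  have hCl : MeasurableSet (mClosure m Ω) := hΩ.union hBmeas
  -- rectangle reversibility in lintegral form
  have hrect : ∀ A B : Set X, MeasurableSet A → MeasurableSet B → ν A < ⊤ → ν B < ⊤ →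
      ∫⁻ x in A, κ x B ∂ν = ∫⁻ x in B, κ x A ∂ν := by
    intro A B hA hB hAf hBf
    have hrev := hst.hrev (fun x y => A.indicator 1 x * B.indicator 1 y)
      (((measurable_one.indicator hA).comp measurable_fst).mul
        ((measurable_one.indicator hB).comp measurable_snd))
      ⟨1, fun x y => by
        by_cases hx : x ∈ A <;> by_cases hy : y ∈ B <;>
          simp [Set.indicator_apply, hx, hy]⟩
    have hinner1 : ∀ x, (∫ y, A.indicator 1 x * B.indicator 1 y ∂m x)
        = A.indicator (fun x => (m x B).toReal) x := by
      intro x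
      rw [MeasureTheory.integral_const_mul, MeasureTheory.integral_indicator_one hB]
      by_cases hx : x ∈ A <;> simp [Set.indicator_apply, hx, measureReal_def]
    have hinner2 : ∀ x, (∫ y, A.indicator 1 y * B.indicator 1 x ∂m x)
        = B.indicator (fun x => (m x A).toReal) x := by
      intro x
      rw [MeasureTheory.integral_mul_const, MeasureTheory.integral_indicator_one hA]
      by_cases hx : x ∈ B <;> simp [Set.indicator_apply, hx, measureReal_def]
    simp only [hinner1, hinner2] at hrev
    rw [MeasureTheory.integral_indicator hA, MeasureTheory.integral_indicator hB] at hrev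
    have hconv : ∀ (S T : Set X), MeasurableSet S → MeasurableSet T →
        ∫ x in S, (m x T).toReal ∂ν = (∫⁻ x in S, m x T ∂ν).toReal := by
      intro S T hS hT
      rw [MeasureTheory.integral_toReal ((hmeasm T hT).aemeasurable.restrict)
        (Filter.Eventually.of_forall fun x => by
          haveI := hprob x; exact measure_lt_top (m x) T)]
    rw [hconv A B hA hB, hconv B A hB hA] at hrev
    have hfin1 : ∫⁻ x in A, m x B ∂ν ≠ ⊤ := by
      refine ne_of_lt (lt_of_le_of_lt ?_ hAf)
      calc ∫⁻ x in A, m x B ∂ν ≤ ∫⁻ _ in A, 1 ∂ν :=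
            MeasureTheory.setLIntegral_mono' hA fun x _ => by
              haveI := hprob x; exact prob_le_one
        _ = ν A := MeasureTheory.setLIntegral_one A
    have hfin2 : ∫⁻ x in B, m x A ∂ν ≠ ⊤ := by
      refine ne_of_lt (lt_of_le_of_lt ?_ hBf)
      calc ∫⁻ x in B, m x A ∂ν ≤ ∫⁻ _ in B, 1 ∂ν :=
            MeasureTheory.setLIntegral_mono' hB fun x _ => by
              haveI := hprob x; exact prob_le_one
        _ = ν B := MeasureTheory.setLIntegral_one B
    exact (ENNReal.toReal_eq_toReal_iff' hfin1 hfin2).1 hrev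
  have hswap : (ν ⊗ₘ κ).map Prod.swap = ν ⊗ₘ κ := swap_invariant_aux κ ν hrect
  set μ := ν ⊗ₘ κ with hμdef
  have hmapfst : μ.map Prod.fst = ν := Measure.fst_compProd ν κ
  have hswap_lint : ∀ f : X × X → ENNReal, Measurable f →
      ∫⁻ p, f p.swap ∂μ = ∫⁻ p, f p ∂μ := by
    intro f hf
    conv_rhs => rw [← hswap]
    rw [lintegral_map hf measurable_swap]
  have hswap_int : ∀ f : X × X → ℝ, AEStronglyMeasurable f μ →
      ∫ p, f p.swap ∂μ = ∫ p, f p ∂μ := by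
    intro f hf
    conv_rhs => rw [← hswap]
    rw [integral_map measurable_swap.aemeasurable (by rwa [hswap])]
  have hswap_integrable : ∀ f : X × X → ℝ, AEStronglyMeasurable f μ → Integrable f μ →
      Integrable (fun p => f p.swap) μ := by
    intro f hf hfi
    have h2 : Integrable f (μ.map Prod.swap) := by rwa [hswap]
    exact (integrable_map_measure (by rwa [hswap]) measurable_swap.aemeasurable).mp h2
  -- the positive part
  set w : X → ℝ := fun x => max (u x) 0 with hwdef
  have hwmeas : Measurable w := hu.max measurable_const
  have hwnn : ∀ x, 0 ≤ w x := fun x => le_max_right _ _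
  have hw_le : ∀ x, ‖w x‖ ≤ ‖u x‖ := fun x => by
    rw [Real.norm_eq_abs, Real.norm_eq_abs, abs_of_nonneg (hwnn x)]
    exact max_le (le_abs_self _) (abs_nonneg _)
  have hw0 : ∀ x ∉ mClosure m Ω, w x = 0 := fun x hx => by
    simp [hwdef, hu0 x hx]
  have hwB : ∀ᵐ x ∂ν.restrict (mBoundary m Ω), w x = 0 :=
    hbdry.mono fun x hx => max_eq_right hx
  have hwL2 : MemLp w 2 (ν.restrict (mClosure m Ω)) :=
    huL2.of_le hwmeas.aestronglyMeasurable (Filter.Eventually.of_forall hw_le)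
  have hwMem : MemL20 m ν Ω w := ⟨hwmeas, hwL2, hwB, hw0⟩
  haveI : IsFiniteMeasure (ν.restrict (mClosure m Ω)) :=
    ⟨by rw [Measure.restrict_apply_univ]; exact hst.hfin⟩
  have huL1 : Integrable u (ν.restrict (mClosure m Ω)) := huL2.integrable one_le_two
  have hw2Int : Integrable (fun x => w x ^ 2) ν := by
    have h1 : (fun x => w x ^ 2) = (mClosure m Ω).indicator (fun x => w x ^ 2) := by
      funext x
      by_cases hx : x ∈ mClosure m Ω <;> simp [Set.indicator_apply, hx, hw0]
    rw [h1, integrable_indicator_iff hCl]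
    exact hwL2.integrable_sq
  -- a.e. integrability of u with respect to the kernels, for x in the m-closure
  have hL1u : ∀ᵐ x ∂ν, x ∈ mClosure m Ω → Integrable u (m x) := by
    have hm1 : Measurable fun p : X × X =>
        (mClosure m Ω).indicator (fun _ => (1 : ENNReal)) p.2 * (‖u p.1‖₊ : ENNReal) :=
      ((measurable_one.indicator hCl).comp measurable_snd).mul
        ((hu.comp measurable_fst).enorm)
    have hm2 : Measurable fun p : X × X =>
        (mClosure m Ω).indicator (fun _ => (1 : ENNReal)) p.1 * (‖u p.2‖₊ : ENNReal) :=
      ((measurable_one.indicator hCl).comp measurable_fst).mul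
        ((hu.comp measurable_snd).enorm)
    have e1 : ∫⁻ p : X × X, (mClosure m Ω).indicator (fun _ => (1 : ENNReal)) p.1
          * (‖u p.2‖₊ : ENNReal) ∂μ
        = ∫⁻ x in mClosure m Ω, ∫⁻ y, (‖u y‖₊ : ENNReal) ∂κ x ∂ν := by
      rw [Measure.lintegral_compProd hm2, ← lintegral_indicator hCl _]
      congr 1; funext x
      by_cases hx : x ∈ mClosure m Ω
      · simp only [Set.indicator_apply, hx, if_true, one_mul]
      · simp [Set.indicator_apply, hx]
    have e2 : ∫⁻ p : X × X, (mClosure m Ω).indicator (fun _ => (1 : ENNReal)) p.2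
          * (‖u p.1‖₊ : ENNReal) ∂μ
        = ∫⁻ x, (‖u x‖₊ : ENNReal) * κ x (mClosure m Ω) ∂ν := by
      rw [Measure.lintegral_compProd hm1]
      congr 1; funext x
      simp_rw [mul_comm]
      calc ∫⁻ b, (‖u x‖₊ : ENNReal) * (mClosure m Ω).indicator (fun _ => (1 : ENNReal)) b ∂κ x
          = (‖u x‖₊ : ENNReal) * ∫⁻ b, (mClosure m Ω).indicator 1 b ∂κ x :=
            lintegral_const_mul _ (measurable_one.indicator hCl)
        _ = (‖u x‖₊ : ENNReal) * κ x (mClosure m Ω) := by rw [lintegral_indicator_one hCl]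
    have eswap : ∫⁻ p : X × X, (mClosure m Ω).indicator (fun _ => (1 : ENNReal)) p.1
          * (‖u p.2‖₊ : ENNReal) ∂μ
        = ∫⁻ p : X × X, (mClosure m Ω).indicator (fun _ => (1 : ENNReal)) p.2
          * (‖u p.1‖₊ : ENNReal) ∂μ := by
      rw [← hswap_lint _ hm2]
      simp only [Prod.fst_swap, Prod.snd_swap]
    have hbound : ∫⁻ x, (‖u x‖₊ : ENNReal) * κ x (mClosure m Ω) ∂ν
        ≤ ∫⁻ x in mClosure m Ω, (‖u x‖₊ : ENNReal) ∂ν := by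
      have : ∫⁻ x, (‖u x‖₊ : ENNReal) * κ x (mClosure m Ω) ∂ν
          ≤ ∫⁻ x, (mClosure m Ω).indicator (fun x => (‖u x‖₊ : ENNReal)) x ∂ν := by
        refine lintegral_mono fun x => ?_
        by_cases hx : x ∈ mClosure m Ω
        · haveI := hprob x
          simp only [Set.indicator_apply, hx, if_true]
          calc (‖u x‖₊ : ENNReal) * κ x (mClosure m Ω) ≤ (‖u x‖₊ : ENNReal) * 1 :=
              mul_le_mul_right (by rw [hκ]; exact prob_le_one) _
            _ = (‖u x‖₊ : ENNReal) := mul_one _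
        · simp [Set.indicator_apply, hx, hu0 x hx]
      rwa [lintegral_indicator hCl _] at this
    have hufin : ∫⁻ x in mClosure m Ω, (‖u x‖₊ : ENNReal) ∂ν < ⊤ := huL1.2
    have hKfin : ∫⁻ x in mClosure m Ω, ∫⁻ y, (‖u y‖₊ : ENNReal) ∂κ x ∂ν < ⊤ := by
      rw [← e1, eswap, e2]
      exact lt_of_le_of_lt hbound hufin
    have hmeasint : Measurable fun x => ∫⁻ y, (‖u y‖₊ : ENNReal) ∂κ x :=
      Measurable.lintegral_kernel_prod_right' ((hu.comp measurable_snd).enorm)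
    have hae := ae_lt_top hmeasint hKfin.ne
    refine ((ae_restrict_iff' hCl).1 hae).mono fun x hx hxCl => ?_
    exact ⟨hu.aestronglyMeasurable, hx hxCl⟩
  have hL1w : ∀ᵐ x ∂ν, x ∈ mClosure m Ω → Integrable w (m x) :=
    hL1u.mono fun x h hx =>
      (h hx).mono hwmeas.aestronglyMeasurable (Filter.Eventually.of_forall hw_le)
  -- integrability over the product measure
  have haesm_x2 : AEStronglyMeasurable (fun p : X × X => w p.1 ^ 2) μ :=
    ((hwmeas.comp measurable_fst).pow_const 2).aestronglyMeasurable
  have haesm_y2 : AEStronglyMeasurable (fun p : X × X => w p.2 ^ 2) μ :=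
    ((hwmeas.comp measurable_snd).pow_const 2).aestronglyMeasurable
  have haesm_xy : AEStronglyMeasurable (fun p : X × X => w p.1 * w p.2) μ :=
    ((hwmeas.comp measurable_fst).mul (hwmeas.comp measurable_snd)).aestronglyMeasurable
  have hIx2 : Integrable (fun p : X × X => w p.1 ^ 2) μ := by
    have h2 : Integrable (fun x => w x ^ 2) (μ.map Prod.fst) := by rwa [hmapfst]
    exact (integrable_map_measure
      (by rw [hmapfst]; exact (hwmeas.pow_const 2).aestronglyMeasurable)
      measurable_fst.aemeasurable).mp h2
  have hIy2 : Integrable (fun p : X × X => w p.2 ^ 2) μ := by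
    have := hswap_integrable _ haesm_x2 hIx2
    simpa using this
  have hIxy : Integrable (fun p : X × X => w p.1 * w p.2) μ := by
    refine Integrable.mono' (hIx2.add hIy2) haesm_xy (Filter.Eventually.of_forall fun p => ?_)
    rw [Real.norm_eq_abs, abs_mul]
    show |w p.1| * |w p.2| ≤ w p.1 ^ 2 + w p.2 ^ 2
    nlinarith [sq_nonneg (|w p.1| - |w p.2|), sq_abs (w p.1), sq_abs (w p.2),
      abs_nonneg (w p.1), abs_nonneg (w p.2)]
  have hIE : Integrable (fun p : X × X => (w p.2 - w p.1) ^ 2) μ := by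
    have heq : (fun p : X × X => (w p.2 - w p.1) ^ 2)
        = fun p => w p.1 ^ 2 + w p.2 ^ 2 - 2 * (w p.1 * w p.2) := by
      funext p; ring
    rw [heq]
    exact (hIx2.add hIy2).sub (hIxy.const_mul 2)
  -- integral identities
  have hIntx : ∫ p, w p.1 ^ 2 ∂μ = ∫ x, w x ^ 2 ∂ν := by
    conv_rhs => rw [← hmapfst]
    rw [integral_map measurable_fst.aemeasurable
      (by rw [hmapfst]; exact (hwmeas.pow_const 2).aestronglyMeasurable)]
  have hInty : ∫ p, w p.2 ^ 2 ∂μ = ∫ x, w x ^ 2 ∂ν := by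
    rw [← hIntx, ← hswap_int _ haesm_x2]
    simp
  have hIntxy : ∫ p, w p.1 * w p.2 ∂μ = ∫ x, w x * ∫ y, w y ∂m x ∂ν := by
    rw [Measure.integral_compProd hIxy]
    congr 1; funext x
    show ∫ y, w x * w y ∂κ x = w x * ∫ y, w y ∂m x
    rw [hκ]
    exact MeasureTheory.integral_const_mul _ _
  have hIg : Integrable (fun x => w x * ∫ y, w y ∂m x) ν := by
    have h := (Measure.integrable_compProd_iff haesm_xy).1 hIxy
    have hsm : StronglyMeasurable fun x => ∫ y, w x * w y ∂κ x :=
      (((hwmeas.comp measurable_fst).mul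
        (hwmeas.comp measurable_snd)).stronglyMeasurable).integral_kernel_prod_right'
    have h2 : Integrable (fun x => ∫ y, w x * w y ∂κ x) ν := by
      refine Integrable.mono' h.2 hsm.aestronglyMeasurable
        (Filter.Eventually.of_forall fun x => ?_)
      exact norm_integral_le_integral_norm _
    have heq : (fun x => ∫ y, w x * w y ∂κ x) = fun x => w x * ∫ y, w y ∂m x := by
      funext x
      rw [MeasureTheory.integral_const_mul, hκ]
    rwa [heq] at h2
  -- pointwise identity for the Laplacian of w
  have hptwise : ∀ᵐ x ∂ν, -(deltaM m w x) * w x = w x ^ 2 - w x * ∫ y, w y ∂m x := by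
    filter_upwards [hL1w] with x hx
    by_cases hwx : w x = 0
    · simp [hwx]
    · have hxCl : x ∈ mClosure m Ω := by
        by_contra h; exact hwx (hw0 x h)
      have hint := hx hxCl
      have hdm : deltaM m w x = (∫ y, w y ∂m x) - w x := by
        rw [show deltaM m w x = ∫ y, (w y - w x) ∂m x from rfl,
          integral_sub hint (integrable_const _), integral_const]
        haveI := hprob x
        simp
      rw [hdm]; ring
  have hsub' : ∀ᵐ x ∂ν, x ∈ Ω → -(deltaM m u x) ≤ 0 := (ae_restrict_iff' hΩ).1 hsub
  have hbd' : ∀ᵐ x ∂ν, x ∈ mBoundary m Ω → u x ≤ 0 := (ae_restrict_iff' hBmeas).1 hbdry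
  have hnonpos : ∀ᵐ x ∂ν, -(deltaM m w x) * w x ≤ 0 := by
    filter_upwards [hsub', hbd', hL1u, hL1w] with x h1 h2 h3 h4
    by_cases hxCl : x ∈ mClosure m Ω
    · rcases (show x ∈ Ω ∪ mBoundary m Ω from hxCl) with hxΩ | hxB
      · by_cases hux : 0 < u x
        · have hIu := h3 hxCl
          have hIw := h4 hxCl
          have hwx : w x = u x := max_eq_left hux.le
          have h5 : deltaM m u x ≤ deltaM m w x := by
            have e1 : deltaM m u x = (∫ y, u y ∂m x) - u x := by
              rw [show deltaM m u x = ∫ y, (u y - u x) ∂m x from rfl,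
                integral_sub hIu (integrable_const _), integral_const]
              haveI := hprob x
              simp
            have e2 : deltaM m w x = (∫ y, w y ∂m x) - w x := by
              rw [show deltaM m w x = ∫ y, (w y - w x) ∂m x from rfl,
                integral_sub hIw (integrable_const _), integral_const]
              haveI := hprob x
              simp
            have hmono : ∫ y, u y ∂m x ≤ ∫ y, w y ∂m x :=
              integral_mono hIu hIw fun y => le_max_left _ _
            rw [e1, e2, hwx]
            linarith
          have h6 : -(deltaM m w x) ≤ 0 := le_trans (neg_le_neg h5) (h1 hxΩ)
          exact mul_nonpos_of_nonpos_of_nonneg h6 (hwnn x)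
        · have hz : w x = 0 := max_eq_right (not_lt.1 hux)
          simp [hz]
      · have hz : w x = 0 := max_eq_right (h2 hxB)
        simp [hz]
    · simp [hw0 x hxCl]
  have hDle : ∫ x, (w x ^ 2 - w x * ∫ y, w y ∂m x) ∂ν ≤ 0 := by
    rw [← integral_congr_ae hptwise]
    exact integral_nonpos_of_ae hnonpos
  have hsplit : ∫ x, (w x ^ 2 - w x * ∫ y, w y ∂m x) ∂ν
      = (∫ x, w x ^ 2 ∂ν) - ∫ x, w x * ∫ y, w y ∂m x ∂ν := integral_sub hw2Int hIg
  have hkey : (∫ x, w x ^ 2 ∂ν) - (∫ p, w p.1 * w p.2 ∂μ) ≤ 0 := by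
    rw [hIntxy, ← hsplit]
    exact hDle
  have hE2 : ∫ p, (w p.2 - w p.1) ^ 2 ∂μ
      = 2 * ((∫ x, w x ^ 2 ∂ν) - ∫ p, w p.1 * w p.2 ∂μ) := by
    have heq : (fun p : X × X => (w p.2 - w p.1) ^ 2)
        = fun p => w p.1 ^ 2 + w p.2 ^ 2 - 2 * (w p.1 * w p.2) := by
      funext p; ring
    have h1 : Integrable (fun p : X × X => w p.1 ^ 2 + w p.2 ^ 2) μ := by
      exact hIx2.add hIy2
    have h2 : Integrable (fun p : X × X => 2 * (w p.1 * w p.2)) μ := by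
      exact hIxy.const_mul 2
    rw [heq, integral_sub h1 h2, integral_add hIx2 hIy2,
      MeasureTheory.integral_const_mul, hIntx, hInty]
    ring
  have hE2le : ∫ p, (w p.2 - w p.1) ^ 2 ∂μ ≤ 0 := by
    rw [hE2]; linarith
  have hGE : gradEnergy m ν Ω w ≤ 0 := by
    have hsetle := setIntegral_le_integral
      (s := (mClosure m Ω) ×ˢ (mClosure m Ω)) hIE
      (Filter.Eventually.of_forall fun p => sq_nonneg (w p.2 - w p.1))
    calc gradEnergy m ν Ω w
        = (1/2) * ∫ p in (mClosure m Ω) ×ˢ (mClosure m Ω), (w p.2 - w p.1) ^ 2 ∂μ := by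
          rw [Measure.setIntegral_compProd hCl hCl hIE.integrableOn]
          rfl
      _ ≤ (1/2) * ∫ p, (w p.2 - w p.1) ^ 2 ∂μ := by linarith
      _ ≤ 0 := by linarith
  have hP := hst.hpoincare w hwMem
  have hΩint : ∫ x in Ω, w x ^ 2 ∂ν = 0 := by
    have h0 : 0 ≤ ∫ x in Ω, w x ^ 2 ∂ν := integral_nonneg fun x => sq_nonneg _
    nlinarith [le_trans hP hGE, hst.hlamPos]
  have hae0 : ∀ᵐ x ∂ν.restrict Ω, w x ^ 2 = 0 :=
    (integral_eq_zero_iff_of_nonneg (fun x => sq_nonneg _) hw2Int.integrableOn).1 hΩint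
  have hΩle : ∀ᵐ x ∂ν, x ∈ Ω → u x ≤ 0 := by
    filter_upwards [(ae_restrict_iff' hΩ).1 hae0] with x hx hxΩ
    have hwx : w x = 0 := by
      have h := hx hxΩ
      have h := hx hxΩ
      nlinarith [sq_nonneg (w x), hwnn x]
    calc u x ≤ max (u x) 0 := le_max_left _ _
      _ = 0 := hwx
  refine (ae_restrict_iff' hCl).2 ?_
  filter_upwards [hΩle, hbd'] with x h1 h2 hx
  rcases (show x ∈ Ω ∪ mBoundary m Ω from hx) with h | h
  · exact h1 h
  · exact h2 h
end

section
/- Sub- and supersolution method: Under the standing assumptions, let g ∈ C¹(ℝ) and let ŭ and ū be L∞-bounded subsolution and supersolution, respectively, of (P(g)) with ŭ ≤ ū ν-a.e. Define the truncation h(x,r) := g(ŭ(x)) if r < ŭ(x), h(x,r) := g(r) if ŭ(x) ≤ r ≤ ū(x), and h(x,r) := g(ū(x)) if r > ū(x). Then the problem (P(h)) has a solution u. Moreover, if g is non-decreasing, then ŭ ≤ u ≤ ū ν-a.e. and u is a solution of (P(g)). -/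
open MeasureTheory Set

section AuxSubSuper
open Filter

private lemma aux_integrable_of_bdd {X : Type*} [MeasurableSpace X] {μ : Measure X}
    [IsFiniteMeasure μ] {f : X → ℝ} (hf : Measurable f) {C : ℝ} (hC : ∀ x, |f x| ≤ C) :
    Integrable f μ :=
  (integrable_const C).mono' hf.aestronglyMeasurable
    (Eventually.of_forall (fun x => by simpa [Real.norm_eq_abs] using hC x))

private lemma aux_clamp_mono {a b r s : ℝ} (h : r ≤ s) : max a (min r b) ≤ max a (min s b) :=
  max_le_max le_rfl (min_le_min h le_rfl)

private lemma aux_clamp_sub_le {a b r s : ℝ} (h : r ≤ s) :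
    max a (min s b) - max a (min r b) ≤ s - r := by
  simp only [max_def, min_def]
  split_ifs <;> linarith

private lemma aux_clamp_mem {a b C r : ℝ} (ha : |a| ≤ C) (hb : |b| ≤ C) :
    max a (min r b) ∈ Icc (-C) C := by
  rw [abs_le] at ha hb
  exact ⟨le_trans ha.1 (le_max_left _ _),
    max_le ha.2 (le_trans (min_le_right _ _) hb.2)⟩

private lemma aux_phi_mono {g : ℝ → ℝ} {K a b C : ℝ} (hK : 0 ≤ K)
    (hmono : MonotoneOn (fun t => g t + K * t) (Icc (-C) C))
    (ha : |a| ≤ C) (hb : |b| ≤ C) {r s : ℝ} (hrs : r ≤ s) :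
    g (max a (min r b)) + K * r ≤ g (max a (min s b)) + K * s := by
  have h1 := hmono (aux_clamp_mem ha hb (r := r)) (aux_clamp_mem ha hb (r := s))
    (aux_clamp_mono hrs)
  have h2 := aux_clamp_sub_le (a := a) (b := b) hrs
  have h3 : (0:ℝ) ≤ K * ((s - r) - (max a (min s b) - max a (min r b))) :=
    mul_nonneg hK (by linarith)
  simp only at h1
  nlinarith

private lemma aux_null_transfer {X : Type*} [MeasurableSpace X] {m : X → Measure X}
    {ν : Measure X} {Ω : Set X} (hrw : IsRandomWalk m) (hrev : Reversible m ν)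
    (hΩ : MeasurableSet Ω) (hfin : ν Ω < ⊤) {N : Set X} (hN : MeasurableSet N)
    (hN0 : ν N = 0) : ∀ᵐ x ∂(ν.restrict Ω), m x N = 0 := by
  haveI : ∀ x, IsProbabilityMeasure (m x) := hrw.1
  set F : X → X → ℝ := fun x y => Ω.indicator (fun _ => (1:ℝ)) x * N.indicator (fun _ => 1) y
    with hF
  have hFmeas : Measurable (Function.uncurry F) :=
    ((measurable_const.indicator hΩ).comp measurable_fst).mul
      ((measurable_const.indicator hN).comp measurable_snd)
  have hFbdd : ∃ C, ∀ x y, |F x y| ≤ C := by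
    refine ⟨1, fun x y => ?_⟩
    simp only [hF, abs_mul]
    calc |Ω.indicator (fun _ => (1:ℝ)) x| * |N.indicator (fun _ => (1:ℝ)) y|
        ≤ 1 * 1 := by
          gcongr <;> rw [abs_le] <;> constructor <;>
            first
              | exact le_trans (by norm_num) (Set.indicator_nonneg (by norm_num) _)
              | exact Set.indicator_le_self' (by norm_num) _ |>.trans (by norm_num)
      _ = 1 := by norm_num
  have hid := hrev F hFmeas hFbdd
  have hinner1 : ∀ x, (∫ y, F x y ∂(m x)) = Ω.indicator (fun _ => (1:ℝ)) x * (m x N).toReal := by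
    intro x
    rw [integral_const_mul]
    congr 1
    rw [integral_indicator_const _ hN]
    simp
    rfl
  have hinner2 : ∀ x, (∫ y, F y x ∂(m x)) = (m x Ω).toReal * N.indicator (fun _ => (1:ℝ)) x := by
    intro x
    simp only [hF]
    rw [integral_mul_const]
    congr 1
    rw [integral_indicator_const _ hΩ]
    simp
    rfl
  simp only [hinner1, hinner2] at hid
  have hrhs : ∫ x, (m x Ω).toReal * N.indicator (fun _ => (1:ℝ)) x ∂ν = 0 := by
    rw [integral_eq_zero_of_ae]
    have hae : ∀ᵐ x ∂ν, x ∉ N := by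
      rw [ae_iff]; simpa [hN0] using measure_mono_null (fun x hx => by simpa using hx) hN0
    exact hae.mono fun x hx => by simp [Set.indicator_of_notMem hx]
  rw [hrhs] at hid
  have hfmeas : Measurable fun x => Ω.indicator (fun _ => (1:ℝ)) x * (m x N).toReal :=
    (measurable_const.indicator hΩ).mul (hrw.2 N hN).ennreal_toReal
  have hfint : Integrable (fun x => Ω.indicator (fun _ => (1:ℝ)) x * (m x N).toReal) ν := by
    refine Integrable.mono' (g := fun x => Ω.indicator (fun _ => (1:ℝ)) x) ?_
      hfmeas.aestronglyMeasurable (Eventually.of_forall fun x => ?_)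
    · rw [integrable_indicator_iff hΩ]
      exact integrableOn_const hfin.ne
    · rw [Real.norm_eq_abs, abs_mul]
      by_cases hx : x ∈ Ω
      · simp only [Set.indicator_of_mem hx, abs_one, one_mul]
        rw [ENNReal.abs_toReal]
        exact ENNReal.toReal_le_of_le_ofReal zero_le_one (by simpa using prob_le_one)
      · simp [Set.indicator_of_notMem hx]
  have hf0 : ∀ᵐ x ∂ν, Ω.indicator (fun _ => (1:ℝ)) x * (m x N).toReal = 0 :=
    (integral_eq_zero_iff_of_nonneg (fun x => mul_nonneg
      (Set.indicator_nonneg (fun _ _ => zero_le_one) x) ENNReal.toReal_nonneg) hfint).mp hid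
  rw [ae_restrict_iff' hΩ]
  refine hf0.mono fun x hx hxΩ => ?_
  rw [Set.indicator_of_mem hxΩ, one_mul] at hx
  rcases (ENNReal.toReal_eq_zero_iff _).mp hx with h | h
  · exact h
  · exact absurd h (measure_ne_top _ _)

end AuxSubSuper

/-- **Sub- and supersolution method**: given an `L^∞`-bounded subsolution `usub` and
supersolution `usup` of `(P(g))` with `usub ≤ usup`, the truncated problem `(P(h))` has a
solution; if moreover `g` is non-decreasing, there is a solution `u` of `(P(g))` with
`usub ≤ u ≤ usup`. -/
theorem sub_supersolution_method
    {X : Type*} [MeasurableSpace X] [MeasurableSpace.CountablyGenerated X]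
    (m : X → MeasureTheory.Measure X) (ν : MeasureTheory.Measure X)
    (Ω : Set X) (lam : ℝ) (φ : X → ℝ) (α M : ℝ)
    (hst : Standing m ν Ω lam φ α M)
    (g : ℝ → ℝ) (hg : ContDiff ℝ 1 g)
    (usub usup : X → ℝ)
    (hsubMeas : Measurable usub)
    (hsubL2 : MeasureTheory.MemLp usub 2 (ν.restrict (mClosure m Ω)))
    (hsubExt : ∀ x ∉ mClosure m Ω, usub x = 0)
    (hsubBdd : ∃ C, ∀ x, |usub x| ≤ C)
    (hsubIneq : ∀ᵐ x ∂(ν.restrict Ω), -(deltaM m usub x) ≤ g (usub x))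
    (hsubBdry : ∀ᵐ x ∂(ν.restrict (mBoundary m Ω)), usub x ≤ 0)
    (hsupMeas : Measurable usup)
    (hsupL2 : MeasureTheory.MemLp usup 2 (ν.restrict (mClosure m Ω)))
    (hsupExt : ∀ x ∉ mClosure m Ω, usup x = 0)
    (hsupBdd : ∃ C, ∀ x, |usup x| ≤ C)
    (hsupIneq : ∀ᵐ x ∂(ν.restrict Ω), g (usup x) ≤ -(deltaM m usup x))
    (hsupBdry : ∀ᵐ x ∂(ν.restrict (mBoundary m Ω)), 0 ≤ usup x)
    (hle : ∀ᵐ x ∂(ν.restrict (mClosure m Ω)), usub x ≤ usup x) :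
    (∃ u : X → ℝ, MemL20 m ν Ω u ∧
      ∀ᵐ x ∂(ν.restrict Ω), -(deltaM m u x) =
        (if u x < usub x then g (usub x)
         else if u x ≤ usup x then g (u x) else g (usup x))) ∧
    (Monotone g → ∃ u : X → ℝ, MemL20 m ν Ω u ∧
      (∀ᵐ x ∂(ν.restrict (mClosure m Ω)), usub x ≤ u x ∧ u x ≤ usup x) ∧
      ∀ᵐ x ∂(ν.restrict Ω), -(deltaM m u x) = g (u x)) := by
  classical
  obtain ⟨C1, hC1⟩ := hsubBdd
  obtain ⟨C2, hC2⟩ := hsupBdd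
  set C : ℝ := max (max C1 C2) 0 with hCdef
  have hC0 : (0:ℝ) ≤ C := le_max_right _ _
  have hCsub : ∀ x, |usub x| ≤ C :=
    fun x => (hC1 x).trans ((le_max_left _ _).trans (le_max_left _ _))
  have hCsup : ∀ x, |usup x| ≤ C :=
    fun x => (hC2 x).trans ((le_max_right _ _).trans (le_max_left _ _))
  haveI hprob : ∀ x, IsProbabilityMeasure (m x) := hst.hrw.1
  have hΩm : MeasurableSet Ω := hst.hmeasΩ
  have hBm : MeasurableSet (mBoundary m Ω) := by
    have hEq : mBoundary m Ω = Ωᶜ ∩ {x | 0 < m x Ω} := by ext x; simp [mBoundary]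
    rw [hEq]
    exact hΩm.compl.inter (measurableSet_lt measurable_const (hst.hrw.2 Ω hΩm))
  have hCm : MeasurableSet (mClosure m Ω) := hΩm.union hBm
  have hνΩ : ν Ω < ⊤ :=
    lt_of_le_of_lt (measure_mono (Set.subset_union_left : Ω ⊆ mClosure m Ω)) hst.hfin
  -- constants from `g`
  have hgc : Continuous g := hg.continuous
  have hg'c : Continuous (deriv g) := hg.continuous_deriv le_rfl
  obtain ⟨K0, hK0⟩ :=
    (isCompact_Icc (a := -C) (b := C)).exists_bound_of_continuousOn hg'c.continuousOn
  set K : ℝ := max K0 0 with hKdef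
  have hK : (0:ℝ) ≤ K := le_max_right _ _
  have hK1 : (0:ℝ) < 1 + K := by linarith
  have hGmono : MonotoneOn (fun t => g t + K * t) (Set.Icc (-C) C) := by
    have hdiff : ∀ t : ℝ, HasDerivAt (fun t => g t + K * t) (deriv g t + K) t := by
      intro t
      have h1 : HasDerivAt g (deriv g t) t := (hg.differentiable one_ne_zero t).hasDerivAt
      have h2 : HasDerivAt (fun t : ℝ => K * t) K t := by
        simpa using (hasDerivAt_id t).const_mul K
      exact h1.add h2
    refine monotoneOn_of_deriv_nonneg (convex_Icc _ _)
      ((hgc.add (continuous_const.mul continuous_id)).continuousOn)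
      (fun t _ => (hdiff t).differentiableAt.differentiableWithinAt) ?_
    intro t ht
    rw [(hdiff t).deriv]
    have ht' : t ∈ Set.Icc (-C) C := interior_subset ht
    have hb := hK0 t ht'
    rw [Real.norm_eq_abs, abs_le] at hb
    have : -K0 ≤ deriv g t := hb.1
    have : K0 ≤ K := le_max_left _ _
    linarith
  -- the kernel and the averaging operator `P`
  set κ : ProbabilityTheory.Kernel X X :=
    ⟨m, MeasureTheory.Measure.measurable_of_measurable_coe m (fun A hA => hst.hrw.2 A hA)⟩
    with hκdef
  haveI : ProbabilityTheory.IsMarkovKernel κ := ⟨fun x => hprob x⟩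
  set P : (X → ℝ) → X → ℝ := fun v x => ∫ y, v y ∂(m x) with hPdef
  have hPmeas : ∀ v : X → ℝ, Measurable v → Measurable (P v) := by
    intro v hv
    have h1 : StronglyMeasurable fun x => ∫ y, v y ∂(κ x) :=
      MeasureTheory.StronglyMeasurable.integral_kernel_prod_right
        (f := fun _ y => v y) ((hv.comp measurable_snd).stronglyMeasurable)
    exact h1.measurable
  -- truncation and iteration map
  set cl : X → ℝ → ℝ := fun x r => max (usub x) (min r (usup x)) with hcl
  set T : (X → ℝ) → X → ℝ :=
    fun v x => if x ∈ Ω then (P v x + g (cl x (v x)) + K * v x) / (1 + K) else 0 with hT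
  have hTmeas : ∀ v : X → ℝ, Measurable v → Measurable (T v) := by
    intro v hv
    refine Measurable.ite hΩm ?_ measurable_const
    exact (((hPmeas v hv).add (hgc.measurable.comp (hsubMeas.max (hv.min hsupMeas)))).add
      (hv.const_mul K)).div_const _
  set useq : ℕ → X → ℝ := fun n => T^[n] usub with huseq
  have huseq_zero : useq 0 = usub := rfl
  have huseq_succ : ∀ n, useq (n + 1) = T (useq n) := fun n =>
    Function.iterate_succ_apply' T n usub
  have humeas : ∀ n, Measurable (useq n) := by
    intro n; induction n with
    | zero => exact hsubMeas
    | succ n ih => rw [huseq_succ]; exact hTmeas _ ih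
  -- everywhere bounds (non-uniform in `n`)
  obtain ⟨Mg, hMgb⟩ : ∃ Mg, ∀ t ∈ Set.Icc (-C) C, |g t| ≤ Mg := by
    obtain ⟨Mg0, h⟩ :=
      (isCompact_Icc (a := -C) (b := C)).exists_bound_of_continuousOn hgc.continuousOn
    exact ⟨Mg0, fun t ht => by simpa [Real.norm_eq_abs] using h t ht⟩
  have hclmem : ∀ x r, cl x r ∈ Set.Icc (-C) C := fun x r => aux_clamp_mem (hCsub x) (hCsup x)
  have hbdn : ∀ n, ∃ B, ∀ x, |useq n x| ≤ B := by
    intro n; induction n with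
    | zero => exact ⟨C, hCsub⟩
    | succ n ih =>
      obtain ⟨B, hB⟩ := ih
      set B' : ℝ := max B 0 with hB'
      have hB0 : (0:ℝ) ≤ B' := le_max_right _ _
      have hB1 : ∀ x, |useq n x| ≤ B' := fun x => (hB x).trans (le_max_left _ _)
      set Mg' : ℝ := max Mg 0 with hMg'
      refine ⟨(B' + Mg' + K * B') / (1 + K), fun x => ?_⟩
      rw [huseq_succ]
      by_cases hx : x ∈ Ω
      · simp only [hT, if_pos hx]
        rw [abs_div, abs_of_pos hK1, div_le_div_iff_of_pos_right hK1]
        have h1 : |P (useq n) x| ≤ B' := by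
          have := MeasureTheory.norm_integral_le_of_norm_le_const
            (μ := m x) (f := useq n) (C := B')
            (Filter.Eventually.of_forall fun y => by
              rw [Real.norm_eq_abs]; exact hB1 y)
          simpa [hPdef, Real.norm_eq_abs, measure_univ] using this
        have h2 : |g (cl x (useq n x))| ≤ Mg' :=
          (hMgb _ (hclmem x _)).trans (le_max_left _ _)
        have h3 : |K * useq n x| ≤ K * B' := by
          rw [abs_mul, abs_of_nonneg hK]
          exact mul_le_mul_of_nonneg_left (hB1 x) hK
        calc |P (useq n) x + g (cl x (useq n x)) + K * useq n x|
            ≤ |P (useq n) x + g (cl x (useq n x))| + |K * useq n x| := abs_add_le _ _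
          _ ≤ (|P (useq n) x| + |g (cl x (useq n x))|) + |K * useq n x| := by
              gcongr; exact abs_add_le _ _
          _ ≤ B' + Mg' + K * B' := by gcongr
      · simp only [hT, if_neg hx, abs_zero]
        positivity
  have hint : ∀ n x, Integrable (useq n) (m x) := by
    intro n x
    obtain ⟨B, hB⟩ := hbdn n
    exact aux_integrable_of_bdd (humeas n) hB
  have hintsub : ∀ x, Integrable usub (m x) := fun x => aux_integrable_of_bdd hsubMeas hCsub
  have hintsup : ∀ x, Integrable usup (m x) := fun x => aux_integrable_of_bdd hsupMeas hCsup
  -- null-set transfer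
  have htrans : ∀ N : Set X, MeasurableSet N → ν N = 0 → ∀ᵐ x ∂ν, x ∈ Ω → m x N = 0 :=
    fun N hN h0 => (ae_restrict_iff' hΩm).mp
      (aux_null_transfer hst.hrw hst.hrev hΩm hνΩ hN h0)
  -- unpack the a.e. hypotheses
  have hsubIneq' : ∀ᵐ x ∂ν, x ∈ Ω → -(deltaM m usub x) ≤ g (usub x) :=
    (ae_restrict_iff' hΩm).mp hsubIneq
  have hsupIneq' : ∀ᵐ x ∂ν, x ∈ Ω → g (usup x) ≤ -(deltaM m usup x) :=
    (ae_restrict_iff' hΩm).mp hsupIneq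
  have hsubBdry' : ∀ᵐ x ∂ν, x ∈ mBoundary m Ω → usub x ≤ 0 :=
    (ae_restrict_iff' hBm).mp hsubBdry
  have hsupBdry' : ∀ᵐ x ∂ν, x ∈ mBoundary m Ω → 0 ≤ usup x :=
    (ae_restrict_iff' hBm).mp hsupBdry
  have hle'' : ∀ᵐ x ∂ν, usub x ≤ usup x := by
    filter_upwards [(ae_restrict_iff' hCm).mp hle] with x hx
    by_cases h : x ∈ mClosure m Ω
    · exact hx h
    · rw [hsubExt x h, hsupExt x h]
  -- the Laplacian formula
  have hdelta : ∀ (v : X → ℝ) (x : X), Integrable v (m x) → deltaM m v x = P v x - v x := by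
    intro v x hv
    show (∫ y, (v y - v x) ∂(m x)) = _
    rw [integral_sub hv (integrable_const _), integral_const]
    simp [measure_univ]
    rfl
  -- comparison for `T`
  have hTle : ∀ v w : X → ℝ, Measurable v → Measurable w →
      (∀ x, Integrable v (m x)) → (∀ x, Integrable w (m x)) →
      (∀ᵐ x ∂ν, v x ≤ w x) → ∀ᵐ x ∂ν, T v x ≤ T w x := by
    intro v w hv hw hvi hwi hvw
    have hNm : MeasurableSet {x | ¬ v x ≤ w x} := (measurableSet_le hv hw).compl
    have hN0 : ν {x | ¬ v x ≤ w x} = 0 := ae_iff.mp hvw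
    filter_upwards [htrans _ hNm hN0, hvw] with x hx hvwx
    by_cases hxΩ : x ∈ Ω
    · simp only [hT, if_pos hxΩ]
      rw [div_le_div_iff_of_pos_right hK1]
      have hP : P v x ≤ P w x := by
        refine integral_mono_ae (hvi x) (hwi x) ?_
        rw [Filter.EventuallyLE, ae_iff]
        exact hx hxΩ
      have hφ := aux_phi_mono hK hGmono (hCsub x) (hCsup x) hvwx
      simp only [hcl]
      linarith
    · simp [hT, if_neg hxΩ]
  -- monotone chain
  have hchain : ∀ n, ∀ᵐ x ∂ν, useq n x ≤ useq (n + 1) x := by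
    intro n; induction n with
    | zero =>
      filter_upwards [hsubIneq', hsubBdry', hle''] with x h1 h2 h3
      rw [huseq_succ 0, huseq_zero]
      by_cases hxΩ : x ∈ Ω
      · simp only [hT, if_pos hxΩ]
        rw [le_div_iff₀ hK1]
        have hclx : cl x (usub x) = usub x := by
          simp only [hcl]
          rw [min_eq_left h3, max_self]
        rw [hclx]
        have hdel := hdelta usub x (hintsub x)
        have h1' := h1 hxΩ
        rw [hdel] at h1'
        linarith
      · simp only [hT, if_neg hxΩ]
        by_cases hxB : x ∈ mBoundary m Ω
        · exact h2 hxB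
        · have hxc : x ∉ mClosure m Ω := by
            intro h; rcases h with h | h
            · exact hxΩ h
            · exact hxB h
          rw [hsubExt x hxc]
    | succ n ih =>
      have h2 := hTle (useq n) (useq (n + 1)) (humeas n) (humeas (n + 1))
        (hint n) (hint (n + 1)) ih
      filter_upwards [h2] with x hx
      rw [huseq_succ (n + 1), huseq_succ n]
      rw [huseq_succ n] at hx
      exact hx
  -- the sequence stays below the supersolution
  have hbelow : ∀ n, ∀ᵐ x ∂ν, useq n x ≤ usup x := by
    intro n; induction n with
    | zero => exact hle''
    | succ n ih =>
      have h2 := hTle (useq n) usup (humeas n) hsupMeas (hint n) hintsup ih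
      have h3 : ∀ᵐ x ∂ν, T usup x ≤ usup x := by
        filter_upwards [hsupIneq', hsupBdry', hle''] with x h1 hb h4
        by_cases hxΩ : x ∈ Ω
        · simp only [hT, if_pos hxΩ]
          rw [div_le_iff₀ hK1]
          have hclx : cl x (usup x) = usup x := by
            simp only [hcl]
            rw [min_self, max_eq_right h4]
          rw [hclx]
          have hdel := hdelta usup x (hintsup x)
          have h1' := h1 hxΩ
          rw [hdel] at h1'
          linarith
        · simp only [hT, if_neg hxΩ]
          by_cases hxB : x ∈ mBoundary m Ω
          · exact hb hxB
          · have hxc : x ∉ mClosure m Ω := by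
              intro h; rcases h with h | h
              · exact hxΩ h
              · exact hxB h
            rw [hsupExt x hxc]
      filter_upwards [h2, h3] with x hx1 hx2
      rw [huseq_succ n]
      exact le_trans hx1 hx2
  -- the good set
  set E : Set X := {x | (∀ n, useq n x ≤ useq (n + 1) x) ∧ (∀ n, useq n x ≤ usup x)} with hE
  have hEm : MeasurableSet E := by
    rw [hE, Set.setOf_and]
    refine MeasurableSet.inter ?_ ?_
    · rw [Set.setOf_forall]
      exact MeasurableSet.iInter fun n => measurableSet_le (humeas n) (humeas (n + 1))
    · rw [Set.setOf_forall]
      exact MeasurableSet.iInter fun n => measurableSet_le (humeas n) hsupMeas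
  have hEae : ∀ᵐ x ∂ν, x ∈ E := by
    filter_upwards [ae_all_iff.mpr hchain, ae_all_iff.mpr hbelow] with x a b
    exact ⟨a, b⟩
  have hmonox : ∀ x ∈ E, Monotone fun n => useq n x := fun x hx =>
    monotone_nat_of_le_succ hx.1
  have hlbx : ∀ x ∈ E, ∀ n, usub x ≤ useq n x := fun x hx n => by
    have := hmonox x hx (Nat.zero_le n)
    rwa [show (fun n => useq n x) 0 = usub x from rfl] at this
  have habs : ∀ x ∈ E, ∀ n, |useq n x| ≤ C := fun x hx n => abs_le.mpr
    ⟨le_trans (abs_le.mp (hCsub x)).1 (hlbx x hx n),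
     (hx.2 n).trans (abs_le.mp (hCsup x)).2⟩
  -- the limit function
  set u : X → ℝ := fun x => ⨆ n, useq n x with hu
  have humeas2 : Measurable u := Measurable.iSup humeas
  have hbdd : ∀ x ∈ E, BddAbove (Set.range fun n => useq n x) := fun x hx =>
    ⟨usup x, by rintro r ⟨n, rfl⟩; exact hx.2 n⟩
  have hconv : ∀ x ∈ E, Filter.Tendsto (fun n => useq n x) Filter.atTop (nhds (u x)) :=
    fun x hx => tendsto_atTop_ciSup (hmonox x hx) (hbdd x hx)
  have husub_le : ∀ x ∈ E, usub x ≤ u x := fun x hx => by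
    have := le_ciSup (hbdd x hx) 0
    exact this
  have hu_le : ∀ x ∈ E, u x ≤ usup x := fun x hx => ciSup_le fun n => hx.2 n
  have huabs : ∀ x ∈ E, |u x| ≤ C := fun x hx => abs_le.mpr
    ⟨le_trans (abs_le.mp (hCsub x)).1 (husub_le x hx),
     (hu_le x hx).trans (abs_le.mp (hCsup x)).2⟩
  have huoff : ∀ x ∈ E, x ∉ Ω → u x = 0 := by
    intro x hx hxΩ
    have h1 : Filter.Tendsto (fun n => useq n x) Filter.atTop (nhds 0) := by
      refine tendsto_atTop_of_eventually_const (i₀ := 1) fun n hn => ?_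
      obtain ⟨k, rfl⟩ := Nat.exists_eq_add_of_le' hn
      rw [huseq_succ k]
      simp [hT, if_neg hxΩ]
    exact tendsto_nhds_unique (hconv x hx) h1
  have huoffcl : ∀ x ∉ mClosure m Ω, u x = 0 := by
    intro x hx
    have hxΩ : x ∉ Ω := fun h => hx (Or.inl h)
    have hall : ∀ n, useq n x = 0 := by
      intro n
      cases n with
      | zero => exact hsubExt x hx
      | succ k =>
        rw [huseq_succ k]
        simp [hT, if_neg hxΩ]
    rw [hu]
    simp only [hall, ciSup_const]
  -- fixed point identity
  have hEc : ν Eᶜ = 0 := by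
    have := ae_iff.mp hEae
    exact this
  have hfix : ∀ᵐ x ∂ν, x ∈ Ω →
      (u x - P u x = g (cl x (u x)) ∧ Integrable u (m x) ∧ usub x ≤ u x ∧ u x ≤ usup x) := by
    filter_upwards [htrans Eᶜ hEm.compl hEc, hEae] with x htr hxE hxΩ
    have hmE : m x Eᶜ = 0 := htr hxΩ
    have haeE : ∀ᵐ y ∂(m x), y ∈ E := by
      rw [ae_iff]
      exact hmE
    have h1 : Filter.Tendsto (fun n => useq (n + 1) x) Filter.atTop (nhds (u x)) :=
      (hconv x hxE).comp (Filter.tendsto_add_atTop_nat 1)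
    have hPint : Integrable u (m x) := by
      refine (integrable_const C).mono' humeas2.aestronglyMeasurable ?_
      filter_upwards [haeE] with y hy
      rw [Real.norm_eq_abs]
      exact huabs y hy
    have hPtend : Filter.Tendsto (fun n => P (useq n) x) Filter.atTop (nhds (P u x)) := by
      refine MeasureTheory.tendsto_integral_of_dominated_convergence (fun _ => C)
        (fun n => (humeas n).aestronglyMeasurable) (integrable_const C) ?_ ?_
      · intro n
        filter_upwards [haeE] with y hy
        rw [Real.norm_eq_abs]
        exact habs y hy n
      · filter_upwards [haeE] with y hy
        exact hconv y hy
    have hgtend : Filter.Tendsto (fun n => g (cl x (useq n x)) + K * useq n x) Filter.atTop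
        (nhds (g (cl x (u x)) + K * u x)) := by
      have hclc : Continuous fun r : ℝ => max (usub x) (min r (usup x)) :=
        continuous_const.max (continuous_id.min continuous_const)
      exact ((hgc.tendsto _).comp ((hclc.tendsto _).comp (hconv x hxE))).add
        ((hconv x hxE).const_mul K)
    have h2 : Filter.Tendsto (fun n => useq (n + 1) x) Filter.atTop
        (nhds ((P u x + (g (cl x (u x)) + K * u x)) / (1 + K))) := by
      refine Filter.Tendsto.congr (f₁ := fun n =>
        (P (useq n) x + (g (cl x (useq n x)) + K * useq n x)) / (1 + K)) ?_ ?_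
      · intro n
        rw [huseq_succ n]
        simp only [hT, if_pos hxΩ]
        ring
      · exact (hPtend.add hgtend).div_const (1 + K)
    have heq := tendsto_nhds_unique h1 h2
    refine ⟨?_, hPint, husub_le x hxE, hu_le x hxE⟩
    have hne : (1 + K) ≠ 0 := ne_of_gt hK1
    have : u x * (1 + K) = P u x + (g (cl x (u x)) + K * u x) := (eq_div_iff hne).mp heq
    linarith
  -- membership in L²₀
  have hmem : MemL20 m ν Ω u := by
    refine ⟨humeas2, ?_, ?_, huoffcl⟩
    · haveI : IsFiniteMeasure (ν.restrict (mClosure m Ω)) :=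
        ⟨by rw [Measure.restrict_apply_univ]; exact hst.hfin⟩
      refine MeasureTheory.MemLp.of_bound humeas2.aestronglyMeasurable C ?_
      refine ae_restrict_of_ae ?_
      filter_upwards [hEae] with x hx
      rw [Real.norm_eq_abs]
      exact huabs x hx
    · rw [ae_restrict_iff' hBm]
      filter_upwards [hEae] with x hx hxB
      exact huoff x hx hxB.1
  -- the equation
  have heqn : ∀ᵐ x ∂(ν.restrict Ω), -(deltaM m u x) = g (u x) := by
    rw [ae_restrict_iff' hΩm]
    filter_upwards [hfix] with x hx hxΩ
    obtain ⟨heq, hint', h1, h2⟩ := hx hxΩ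
    rw [hdelta u x hint']
    have hclx : cl x (u x) = u x := by
      simp only [hcl]
      rw [min_eq_left h2, max_eq_right h1]
    rw [hclx] at heq
    linarith
  have heqn2 : ∀ᵐ x ∂(ν.restrict Ω), -(deltaM m u x) =
      (if u x < usub x then g (usub x)
       else if u x ≤ usup x then g (u x) else g (usup x)) := by
    rw [ae_restrict_iff' hΩm]
    filter_upwards [hfix, (ae_restrict_iff' hΩm).mp heqn] with x hx heq hxΩ
    obtain ⟨_, _, h1, h2⟩ := hx hxΩ
    rw [if_neg (not_lt.mpr h1), if_pos h2]
    exact heq hxΩ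
  have hsand : ∀ᵐ x ∂(ν.restrict (mClosure m Ω)), usub x ≤ u x ∧ u x ≤ usup x :=
    ae_restrict_of_ae (hEae.mono fun x hx => ⟨husub_le x hx, hu_le x hx⟩)
  exact ⟨⟨u, hmem, heqn2⟩, fun _ => ⟨u, hmem, hsand, heqn⟩⟩
end

section
/- Necessary bound on the parameter: Under the standing assumptions, let f : [0,∞) → ℝ satisfy hypotheses (H) with constant c₁ > 0, and let λ > 0. If the problem (P(λf)) admits a solution, then λ ≤ λ_m(Ω)/c₁. -/
open MeasureTheory Set
open scoped ENNReal

open scoped ENNReal in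
private lemma rw_null_preserve {X : Type*} [MeasurableSpace X]
    {m : X → MeasureTheory.Measure X} {ν : MeasureTheory.Measure X}
    (hrw : IsRandomWalk m) (hrev : Reversible m ν) [SigmaFinite ν]
    {N : Set X} (hN : MeasurableSet N) (hN0 : ν N = 0) :
    ∀ᵐ x ∂ν, m x N = 0 := by
  have key : ∀ k : ℕ, ∀ᵐ x ∂ν, x ∈ spanningSets ν k → m x N = 0 := by
    intro k
    set S := spanningSets ν k with hS
    have hSm : MeasurableSet S := measurableSet_spanningSets ν k
    set F : X → X → ℝ := fun x y =>
      S.indicator (fun _ => (1 : ℝ)) x * N.indicator (fun _ => (1 : ℝ)) y with hF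
    have hFmeas : Measurable (Function.uncurry F) := by
      exact ((measurable_const.indicator hSm).comp measurable_fst).mul
        ((measurable_const.indicator hN).comp measurable_snd)
    have hFbd : ∃ C, ∀ x y, |F x y| ≤ C := by
      refine ⟨1, fun x y => ?_⟩
      have h1 : |S.indicator (fun _ => (1:ℝ)) x| ≤ 1 := by
        by_cases hx : x ∈ S <;> simp [Set.indicator_apply, hx]
      have h2 : |N.indicator (fun _ => (1:ℝ)) y| ≤ 1 := by
        by_cases hy : y ∈ N <;> simp [Set.indicator_apply, hy]
      calc |F x y| = |S.indicator (fun _ => (1:ℝ)) x| * |N.indicator (fun _ => (1:ℝ)) y| :=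
            abs_mul _ _
        _ ≤ 1 * 1 := mul_le_mul h1 h2 (abs_nonneg _) zero_le_one
        _ = 1 := one_mul 1
    have hrevF := hrev F hFmeas hFbd
    -- compute inner integrals
    have hL : ∀ x : X, (∫ y, F x y ∂(m x)) =
        S.indicator (fun _ => (1:ℝ)) x * (m x N).toReal := by
      intro x
      rw [hF]
      simp only []
      rw [integral_const_mul, integral_indicator_const (1:ℝ) hN, smul_eq_mul,
        mul_one]
      rfl
    have hR : ∀ x : X, (∫ y, F y x ∂(m x)) =
        N.indicator (fun _ => (1:ℝ)) x * (m x S).toReal := by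
      intro x
      rw [hF]
      simp only []
      simp_rw [mul_comm]
      rw [integral_const_mul, integral_indicator_const (1:ℝ) hSm, smul_eq_mul,
        mul_one]
      rfl
    simp_rw [hL, hR] at hrevF
    -- RHS is zero
    have hNae : ∀ᵐ x ∂ν, x ∉ N := by
      rw [ae_iff]; simpa using hN0
    have hRzero : ∫ x, N.indicator (fun _ => (1:ℝ)) x * (m x S).toReal ∂ν = 0 := by
      apply integral_eq_zero_of_ae
      filter_upwards [hNae] with x hx
      simp [Set.indicator_of_notMem hx]
    rw [hRzero] at hrevF
    set h : X → ℝ := fun x => S.indicator (fun _ => (1:ℝ)) x * (m x N).toReal with hh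
    have hmeas_h : Measurable h :=
      (measurable_const.indicator hSm).mul ((hrw.2 N hN).ennreal_toReal)
    have hnn : ∀ x, 0 ≤ h x := fun x =>
      mul_nonneg (Set.indicator_nonneg (fun _ _ => zero_le_one) x) ENNReal.toReal_nonneg
    rw [integral_eq_lintegral_of_nonneg_ae (Filter.Eventually.of_forall hnn)
      hmeas_h.aestronglyMeasurable] at hrevF
    have hTle : ∫⁻ x, ENNReal.ofReal (h x) ∂ν ≤ ν S := by
      have hpt : ∀ x, ENNReal.ofReal (h x) ≤ S.indicator (fun _ => (1:ℝ≥0∞)) x := by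
        intro x
        by_cases hx : x ∈ S
        · haveI := hrw.1 x
          have h1 : h x = (m x N).toReal := by
            simp [hh, Set.indicator_of_mem hx]
          rw [h1, Set.indicator_of_mem hx, ENNReal.ofReal_toReal (measure_ne_top _ _)]
          exact prob_le_one
        · have h1 : h x = 0 := by simp [hh, Set.indicator_of_notMem hx]
          simp [h1]
      calc ∫⁻ x, ENNReal.ofReal (h x) ∂ν ≤ ∫⁻ x, S.indicator (fun _ => (1:ℝ≥0∞)) x ∂ν :=
            lintegral_mono hpt
        _ = ν S := lintegral_indicator_one hSm
    have hTne : ∫⁻ x, ENNReal.ofReal (h x) ∂ν ≠ ⊤ :=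
      (lt_of_le_of_lt hTle (measure_spanningSets_lt_top ν k)).ne
    have hT0 : ∫⁻ x, ENNReal.ofReal (h x) ∂ν = 0 := by
      rcases (ENNReal.toReal_eq_zero_iff _).mp hrevF with h0 | h0
      · exact h0
      · exact absurd h0 hTne
    have hae := (lintegral_eq_zero_iff (hmeas_h.ennreal_ofReal)).mp hT0
    filter_upwards [hae] with x hx hxS
    have hx0 : h x = 0 := le_antisymm (by
      have : ENNReal.ofReal (h x) = 0 := hx
      exact ENNReal.ofReal_eq_zero.mp this) (hnn x)
    have hx1 : (m x N).toReal = 0 := by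
      rw [hh] at hx0
      simpa [Set.indicator_of_mem hxS] using hx0
    haveI := hrw.1 x
    exact ((ENNReal.toReal_eq_zero_iff _).mp hx1).resolve_right (measure_ne_top _ _)
  filter_upwards [ae_all_iff.mpr key] with x hx
  have : x ∈ ⋃ k, spanningSets ν k := by
    rw [iUnion_spanningSets]; trivial
  obtain ⟨k, hk⟩ := Set.mem_iUnion.mp this
  exact hx k hk


/-- **Necessary bound on the parameter**: if `f` satisfies hypotheses (H) with constant `c₁`
and `(P(λ f))` has a solution with `λ > 0`, then `λ ≤ λ_m(Ω)/c₁`. -/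
theorem necessary_bound_on_parameter
    {X : Type*} [MeasurableSpace X] [MeasurableSpace.CountablyGenerated X]
    (m : X → MeasureTheory.Measure X) (ν : MeasureTheory.Measure X)
    (Ω : Set X) (lam : ℝ) (φ : X → ℝ) (α M : ℝ)
    (hst : Standing m ν Ω lam φ α M)
    (f : ℝ → ℝ) (c₁ : ℝ) (hH : HypH f c₁)
    (l : ℝ) (hl : 0 < l)
    (hsol : ∃ u : X → ℝ, IsSol m ν Ω l f u) :
    l ≤ lam / c₁ := by
  classical
  obtain ⟨u, ⟨⟨humeas, huL2, hubd, huout⟩, hupos, hueq⟩⟩ := hsol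
  obtain ⟨hfc, hfmono, hf0, hc1, hfge⟩ := hH
  have hrw := hst.hrw
  have hrev := hst.hrev
  haveI := hst.hsigma
  have hΩ : MeasurableSet Ω := hst.hmeasΩ
  have hφmeas : Measurable φ := hst.hphiMem.1
  have hM0 : 0 ≤ M := (hst.halphaPos.trans_le hst.halphaM).le
  have hBmeas : MeasurableSet (mBoundary m Ω) := by
    have h1 : Measurable fun x => m x Ω := hrw.2 Ω hΩ
    have h2 : mBoundary m Ω = Ωᶜ ∩ (fun x => m x Ω) ⁻¹' (Set.Ioi 0) := by
      ext x; simp [mBoundary, Set.mem_setOf_eq, And.comm]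
    rw [h2]; exact hΩ.compl.inter (h1 measurableSet_Ioi)
  have hClmeas : MeasurableSet (mClosure m Ω) := hΩ.union hBmeas
  -- clamped versions
  set φt : X → ℝ := fun x => max (min (φ x) M) 0 with hφtdef
  set ut : X → ℝ := fun x => max (u x) 0 with hutdef
  set v : ℕ → X → ℝ := fun n x => min (ut x) (n : ℝ) with hvdef
  have hφtmeas : Measurable φt := (hφmeas.min measurable_const).max measurable_const
  have hutmeas : Measurable ut := humeas.max measurable_const
  have hvmeas : ∀ n, Measurable (v n) := fun n => hutmeas.min measurable_const
  have hφt0 : ∀ x, 0 ≤ φt x := fun x => le_max_right _ _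
  have hφtM : ∀ x, φt x ≤ M := fun x => max_le (min_le_right _ _) hM0
  have hut0 : ∀ x, 0 ≤ ut x := fun x => le_max_right _ _
  have hv0 : ∀ n x, 0 ≤ v n x := fun n x => le_min (hut0 x) (Nat.cast_nonneg n)
  have hvle : ∀ n x, v n x ≤ (n : ℝ) := fun n x => min_le_right _ _
  have hφt_out : ∀ x ∉ mClosure m Ω, φt x = 0 := by
    intro x hx
    rw [hφtdef]
    simp only [hst.hphiMem.2.2.2 x hx, min_eq_left hM0, max_self]
  have hut_out : ∀ x ∉ mClosure m Ω, ut x = 0 := by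
    intro x hx
    rw [hutdef]; simp [huout x hx]
  have hv_out : ∀ n, ∀ x ∉ mClosure m Ω, v n x = 0 := by
    intro n x hx
    rw [hvdef]; simp [hut_out x hx, Nat.cast_nonneg]
  -- a.e. equality of clamped versions
  have hφbd0 : ∀ᵐ x ∂ν, x ∈ mBoundary m Ω → φ x = 0 :=
    (ae_restrict_iff' hBmeas).mp hst.hphiMem.2.2.1
  have hubd0 : ∀ᵐ x ∂ν, x ∈ mBoundary m Ω → u x = 0 :=
    (ae_restrict_iff' hBmeas).mp hubd
  have huposCl : ∀ᵐ x ∂ν, x ∈ mClosure m Ω → 0 ≤ u x :=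
    (ae_restrict_iff' hClmeas).mp hupos
  have hφΩ' : ∀ᵐ x ∂ν, x ∈ Ω → (α ≤ φ x ∧ φ x ≤ M) := by
    refine (ae_restrict_iff' hΩ).mp ?_
    filter_upwards [hst.hphiLB, hst.hphiUB] with x h1 h2
    exact ⟨h1, h2⟩
  have hφt_eq : ∀ᵐ x ∂ν, φt x = φ x := by
    filter_upwards [hφbd0, hφΩ'] with x h1 h2
    by_cases hx : x ∈ Ω
    · obtain ⟨ha, hb⟩ := h2 hx
      rw [hφtdef]
      simp only [min_eq_left hb, max_eq_left (le_trans hst.halphaPos.le ha)]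
    · by_cases hx2 : x ∈ mBoundary m Ω
      · rw [hφtdef]; simp [h1 hx2, min_eq_left hM0]
      · have hxc : x ∉ mClosure m Ω := fun hc => hc.elim hx hx2
        rw [hφt_out x hxc, hst.hphiMem.2.2.2 x hxc]
  have hut_eq : ∀ᵐ x ∂ν, ut x = u x := by
    filter_upwards [huposCl] with x h1
    by_cases hx : x ∈ mClosure m Ω
    · rw [hutdef]; simp [max_eq_left (h1 hx)]
    · rw [hut_out x hx, huout x hx]
  -- null set preservation
  set N : Set X := {x | ¬(φt x = φ x ∧ ut x = u x)} with hNdef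
  have hNmeas : MeasurableSet N := by
    have h2 : N = ({x | φt x = φ x} ∩ {x | ut x = u x})ᶜ := by
      ext x; simp [hNdef, Set.mem_setOf_eq]
    rw [h2]
    exact ((measurableSet_eq_fun hφtmeas hφmeas).inter
      (measurableSet_eq_fun hutmeas humeas)).compl
  have hN0 : ν N = 0 := by
    rw [hNdef]
    have : ∀ᵐ x ∂ν, φt x = φ x ∧ ut x = u x := by
      filter_upwards [hφt_eq, hut_eq] with x h1 h2; exact ⟨h1, h2⟩
    exact ae_iff.mp this
  have hm_null : ∀ᵐ x ∂ν, m x N = 0 := rw_null_preserve hrw hrev hNmeas hN0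
  -- the big a.e. bundle over ν.restrict Ω
  have hu0Ω : ∀ᵐ x ∂(ν.restrict Ω), 0 ≤ u x :=
    ae_restrict_of_ae_restrict_of_subset Set.subset_union_left hupos
  have hm_nullΩ : ∀ᵐ x ∂(ν.restrict Ω), m x N = 0 :=
    hm_null.filter_mono (ae_mono Measure.restrict_le_self)
  have bundle : ∀ᵐ x ∂(ν.restrict Ω),
      (0 ≤ u x ∧ α ≤ φ x ∧ φ x ≤ M) ∧
      ((∫⁻ y, ENNReal.ofReal (ut y) ∂(m x)) = ENNReal.ofReal (u x - l * f (u x)) ∧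
       (∫⁻ y, ENNReal.ofReal (φt y) ∂(m x)) = ENNReal.ofReal ((1 - lam) * φ x)) ∧
      (0 ≤ u x - l * f (u x) ∧ 0 ≤ (1 - lam) * φ x ∧ f 0 ≤ f (u x)) := by
    filter_upwards [hueq, hu0Ω, hst.hphiLB, hst.hphiUB, hst.heig, hm_nullΩ]
      with x hxeq hxu0 hxα hxM hxeig hxN
    haveI := hrw.1 x
    simp only [deltaM] at hxeq hxeig
    have hφx0 : 0 ≤ φ x := le_trans hst.halphaPos.le hxα
    -- m x - a.e. facts
    have h_ut_ae : ut =ᵐ[m x] u := by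
      refine ae_iff.mpr (measure_mono_null ?_ hxN)
      intro y hy
      exact fun hc => hy hc.2
    have h_φ_ae : φt =ᵐ[m x] φ := by
      refine ae_iff.mpr (measure_mono_null ?_ hxN)
      intro y hy
      exact fun hc => hy hc.1
    have h_u_nn : 0 ≤ᵐ[m x] u := by
      refine ae_iff.mpr (measure_mono_null ?_ hxN)
      intro y hy
      simp only [Pi.zero_apply, Set.mem_setOf_eq, not_le] at hy
      intro hc
      have : ut y = 0 := max_eq_right hy.le
      rw [hc.2] at this
      exact absurd this (ne_of_lt hy)
    have h_φ_nn : 0 ≤ᵐ[m x] φ := by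
      refine ae_iff.mpr (measure_mono_null ?_ hxN)
      intro y hy
      simp only [Pi.zero_apply, Set.mem_setOf_eq, not_le] at hy
      intro hc
      have : φt y = 0 := by
        rw [hφtdef]
        simp only [min_eq_left (le_trans hy.le hM0), max_eq_right hy.le]
      rw [hc.1] at this
      exact absurd this (ne_of_lt hy)
    -- nonlinearity facts
    have hfu0 : f 0 ≤ f (u x) := hfmono Set.self_mem_Ici (Set.mem_Ici.mpr hxu0) hxu0
    have hfupos : 0 < f (u x) := hf0.trans_le hfu0
    -- integrability of u wrt m x
    have hInt' : Integrable (fun y => u y - u x) (m x) := by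
      by_contra hni
      rw [integral_undef hni] at hxeq
      nlinarith [mul_pos hl hfupos]
    have hIntu : Integrable u (m x) := by
      exact (hInt'.add (integrable_const (u x))).congr
        (Filter.Eventually.of_forall fun y => by simp)
    have hval : ∫ y, u y ∂(m x) = u x - l * f (u x) := by
      rw [integral_sub hIntu (integrable_const _), integral_const] at hxeq
      simp only [measure_univ, probReal_univ, ENNReal.toReal_one, one_smul] at hxeq
      linarith
    have key1 : 0 ≤ u x - l * f (u x) := by
      rw [← hval]; exact integral_nonneg_of_ae h_u_nn
    -- integrability of φ wrt m x
    have hIntφ' : Integrable (fun y => φ y - φ x) (m x) := by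
      by_contra hni
      rw [integral_undef hni] at hxeig
      nlinarith [mul_pos hst.hlamPos (hst.halphaPos.trans_le hxα)]
    have hIntφ : Integrable φ (m x) := by
      exact (hIntφ'.add (integrable_const (φ x))).congr
        (Filter.Eventually.of_forall fun y => by simp)
    have hvalφ : ∫ y, φ y ∂(m x) = (1 - lam) * φ x := by
      rw [integral_sub hIntφ (integrable_const _), integral_const] at hxeig
      simp only [measure_univ, probReal_univ, ENNReal.toReal_one, one_smul] at hxeig
      linarith
    have key2 : 0 ≤ (1 - lam) * φ x := by
      rw [← hvalφ]; exact integral_nonneg_of_ae h_φ_nn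
    refine ⟨⟨hxu0, hxα, hxM⟩, ⟨?_, ?_⟩, key1, key2, hfu0⟩
    · rw [lintegral_congr_ae (h_ut_ae.mono fun y hy => by rw [hy]),
        ← ofReal_integral_eq_lintegral_ofReal hIntu h_u_nn, hval]
    · rw [lintegral_congr_ae (h_φ_ae.mono fun y hy => by rw [hy]),
        ← ofReal_integral_eq_lintegral_ofReal hIntφ h_φ_nn, hvalφ]
  -- Part A : the symmetry identity for clamped functions
  have partA : ∫⁻ x, ENNReal.ofReal (φt x) * (∫⁻ y, ENNReal.ofReal (ut y) ∂(m x)) ∂ν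
      = ∫⁻ x, ENNReal.ofReal (ut x) * (∫⁻ y, ENNReal.ofReal (φt y) ∂(m x)) ∂ν := by
    -- kernel for measurability
    let κ : ProbabilityTheory.Kernel X X :=
      ⟨m, MeasureTheory.Measure.measurable_of_measurable_coe m hrw.2⟩
    haveI : ProbabilityTheory.IsMarkovKernel κ := ⟨fun x => hrw.1 x⟩
    have hkm : ∀ {g : X → ℝ≥0∞}, Measurable g → Measurable fun x => ∫⁻ y, g y ∂(m x) := by
      intro g hg
      exact Measurable.lintegral_kernel_prod_right (κ := κ) (f := fun _ y => g y)
        (hg.comp measurable_snd)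
    set Gl : ℕ → X → ℝ≥0∞ :=
      fun n x => ENNReal.ofReal (φt x) * ∫⁻ y, ENNReal.ofReal (v n y) ∂(m x) with hGldef
    set Gr : ℕ → X → ℝ≥0∞ :=
      fun n x => ENNReal.ofReal (v n x) * ∫⁻ y, ENNReal.ofReal (φt y) ∂(m x) with hGrdef
    have hGlmeas : ∀ n, Measurable (Gl n) := fun n =>
      (hφtmeas.ennreal_ofReal).mul (hkm ((hvmeas n).ennreal_ofReal))
    have hGrmeas : ∀ n, Measurable (Gr n) := fun n =>
      ((hvmeas n).ennreal_ofReal).mul (hkm (hφtmeas.ennreal_ofReal))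
    have hinner_v : ∀ (n : ℕ) x, (∫⁻ y, ENNReal.ofReal (v n y) ∂(m x)) ≤ ENNReal.ofReal n := by
      intro n x
      haveI := hrw.1 x
      calc ∫⁻ y, ENNReal.ofReal (v n y) ∂(m x)
          ≤ ∫⁻ _, ENNReal.ofReal (n : ℝ) ∂(m x) :=
            lintegral_mono fun y => ENNReal.ofReal_le_ofReal (hvle n y)
        _ = ENNReal.ofReal (n : ℝ) := by simp
    have hinner_φ : ∀ x, (∫⁻ y, ENNReal.ofReal (φt y) ∂(m x)) ≤ ENNReal.ofReal M := by
      intro x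
      haveI := hrw.1 x
      calc ∫⁻ y, ENNReal.ofReal (φt y) ∂(m x)
          ≤ ∫⁻ _, ENNReal.ofReal M ∂(m x) :=
            lintegral_mono fun y => ENNReal.ofReal_le_ofReal (hφtM y)
        _ = ENNReal.ofReal M := by simp
    have hGl_ne : ∀ n x, Gl n x ≠ ⊤ := fun n x =>
      (ENNReal.mul_lt_top ENNReal.ofReal_lt_top
        (lt_of_le_of_lt (hinner_v n x) ENNReal.ofReal_lt_top)).ne
    have hGr_ne : ∀ n x, Gr n x ≠ ⊤ := fun n x =>
      (ENNReal.mul_lt_top ENNReal.ofReal_lt_top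
        (lt_of_le_of_lt (hinner_φ x) ENNReal.ofReal_lt_top)).ne
    have hGl_int_ne : ∀ n, (∫⁻ x, Gl n x ∂ν) ≠ ⊤ := by
      intro n
      have hb : ∀ x, Gl n x ≤
          (mClosure m Ω).indicator (fun _ => ENNReal.ofReal M * ENNReal.ofReal n) x := by
        intro x
        by_cases hx : x ∈ mClosure m Ω
        · rw [Set.indicator_of_mem hx]
          exact mul_le_mul' (ENNReal.ofReal_le_ofReal (hφtM x)) (hinner_v n x)
        · rw [Set.indicator_of_notMem hx, hGldef]
          simp [hφt_out x hx]
      refine ne_top_of_le_ne_top ?_ (lintegral_mono hb)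
      rw [lintegral_indicator hClmeas, setLIntegral_const]
      exact ENNReal.mul_ne_top
        (ENNReal.mul_ne_top ENNReal.ofReal_ne_top ENNReal.ofReal_ne_top) hst.hfin.ne
    have hGr_int_ne : ∀ n, (∫⁻ x, Gr n x ∂ν) ≠ ⊤ := by
      intro n
      have hb : ∀ x, Gr n x ≤
          (mClosure m Ω).indicator (fun _ => ENNReal.ofReal n * ENNReal.ofReal M) x := by
        intro x
        by_cases hx : x ∈ mClosure m Ω
        · rw [Set.indicator_of_mem hx]
          exact mul_le_mul' (ENNReal.ofReal_le_ofReal (hvle n x)) (hinner_φ x)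
        · rw [Set.indicator_of_notMem hx, hGrdef]
          simp [hv_out n x hx]
      refine ne_top_of_le_ne_top ?_ (lintegral_mono hb)
      rw [lintegral_indicator hClmeas, setLIntegral_const]
      exact ENNReal.mul_ne_top
        (ENNReal.mul_ne_top ENNReal.ofReal_ne_top ENNReal.ofReal_ne_top) hst.hfin.ne
    -- per-n identity from reversibility
    have hAB : ∀ n : ℕ, (∫⁻ x, Gl n x ∂ν) = ∫⁻ x, Gr n x ∂ν := by
      intro n
      have hFmeas : Measurable (Function.uncurry fun x y => φt x * v n y) :=
        (hφtmeas.comp measurable_fst).mul ((hvmeas n).comp measurable_snd)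
      have hFbd : ∃ C, ∀ x y, |φt x * v n y| ≤ C := by
        refine ⟨M * n, fun x y => ?_⟩
        rw [abs_of_nonneg (mul_nonneg (hφt0 x) (hv0 n y))]
        exact mul_le_mul (hφtM x) (hvle n y) (hv0 n y) hM0
      have hrevn := hrev (fun x y => φt x * v n y) hFmeas hFbd
      have claimL : ∫ x, (∫ y, φt x * v n y ∂(m x)) ∂ν = (∫⁻ x, Gl n x ∂ν).toReal := by
        have h1 : ∀ x, (∫ y, φt x * v n y ∂(m x)) = (Gl n x).toReal := by
          intro x
          rw [integral_const_mul,
            integral_eq_lintegral_of_nonneg_ae (Filter.Eventually.of_forall fun y => hv0 n y)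
              ((hvmeas n).aestronglyMeasurable),
            hGldef, ENNReal.toReal_mul, ENNReal.toReal_ofReal (hφt0 x)]
        simp_rw [h1]
        rw [integral_eq_lintegral_of_nonneg_ae
          (Filter.Eventually.of_forall fun x => ENNReal.toReal_nonneg)
          ((hGlmeas n).ennreal_toReal.aestronglyMeasurable)]
        congr 1
        exact lintegral_congr fun x => ENNReal.ofReal_toReal (hGl_ne n x)
      have claimR : ∫ x, (∫ y, φt y * v n x ∂(m x)) ∂ν = (∫⁻ x, Gr n x ∂ν).toReal := by
        have h1 : ∀ x, (∫ y, φt y * v n x ∂(m x)) = (Gr n x).toReal := by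
          intro x
          rw [integral_mul_const,
            integral_eq_lintegral_of_nonneg_ae (Filter.Eventually.of_forall fun y => hφt0 y)
              (hφtmeas.aestronglyMeasurable),
            hGrdef, ENNReal.toReal_mul, ENNReal.toReal_ofReal (hv0 n x), mul_comm]
        simp_rw [h1]
        rw [integral_eq_lintegral_of_nonneg_ae
          (Filter.Eventually.of_forall fun x => ENNReal.toReal_nonneg)
          ((hGrmeas n).ennreal_toReal.aestronglyMeasurable)]
        congr 1
        exact lintegral_congr fun x => ENNReal.ofReal_toReal (hGr_ne n x)
      rw [claimL, claimR] at hrevn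
      exact (ENNReal.toReal_eq_toReal_iff' (hGl_int_ne n) (hGr_int_ne n)).mp hrevn
    -- monotone convergence in n
    have hmono : ∀ y, Monotone fun n : ℕ => ENNReal.ofReal (v n y) := by
      intro y i j hij
      exact ENNReal.ofReal_le_ofReal (min_le_min le_rfl (Nat.cast_le.mpr hij))
    have hsup : ∀ y, (⨆ n : ℕ, ENNReal.ofReal (v n y)) = ENNReal.ofReal (ut y) := by
      intro y
      apply le_antisymm
      · exact iSup_le fun n => ENNReal.ofReal_le_ofReal (min_le_left _ _)
      · refine le_iSup_of_le ⌈ut y⌉₊ ?_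
        rw [hvdef]
        simp only [min_eq_left (Nat.le_ceil (ut y))]
        exact le_rfl
    have hsup_int : ∀ x, (⨆ n : ℕ, ∫⁻ y, ENNReal.ofReal (v n y) ∂(m x))
        = ∫⁻ y, ENNReal.ofReal (ut y) ∂(m x) := by
      intro x
      rw [← lintegral_iSup (fun n => (hvmeas n).ennreal_ofReal) (fun i j hij y => hmono y hij)]
      exact lintegral_congr fun y => hsup y
    have hGlMono : Monotone Gl := by
      intro i j hij x
      exact mul_le_mul' le_rfl (lintegral_mono fun y => hmono y hij)
    have hGrMono : Monotone Gr := by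
      intro i j hij x
      exact mul_le_mul' (hmono x hij) le_rfl
    calc ∫⁻ x, ENNReal.ofReal (φt x) * (∫⁻ y, ENNReal.ofReal (ut y) ∂(m x)) ∂ν
        = ∫⁻ x, ⨆ n : ℕ, Gl n x ∂ν := by
          refine lintegral_congr fun x => ?_
          rw [hGldef]
          simp only []
          rw [← ENNReal.mul_iSup, hsup_int x]
      _ = ⨆ n : ℕ, ∫⁻ x, Gl n x ∂ν := lintegral_iSup hGlmeas hGlMono
      _ = ⨆ n : ℕ, ∫⁻ x, Gr n x ∂ν := by simp_rw [hAB]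
      _ = ∫⁻ x, ⨆ n : ℕ, Gr n x ∂ν := (lintegral_iSup hGrmeas hGrMono).symm
      _ = ∫⁻ x, ENNReal.ofReal (ut x) * (∫⁻ y, ENNReal.ofReal (φt y) ∂(m x)) ∂ν := by
          refine lintegral_congr fun x => ?_
          rw [hGrdef]
          simp only []
          rw [← ENNReal.iSup_mul, hsup x]
  -- restrict both sides of partA to Ω
  have hφt_off : ∀ᵐ x ∂ν, x ∈ Ωᶜ → φt x = 0 := by
    filter_upwards [hφbd0] with x h1 hx
    by_cases hx2 : x ∈ mBoundary m Ω
    · rw [hφtdef]; simp [h1 hx2, min_eq_left hM0]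
    · exact hφt_out x (fun hc => hc.elim hx hx2)
  have hut_off : ∀ᵐ x ∂ν, x ∈ Ωᶜ → ut x = 0 := by
    filter_upwards [hubd0] with x h1 hx
    by_cases hx2 : x ∈ mBoundary m Ω
    · rw [hutdef]; simp [h1 hx2]
    · exact hut_out x (fun hc => hc.elim hx hx2)
  have hsplitL : ∫⁻ x, ENNReal.ofReal (φt x) * (∫⁻ y, ENNReal.ofReal (ut y) ∂(m x)) ∂ν
      = ∫⁻ x in Ω, ENNReal.ofReal (φt x) * (∫⁻ y, ENNReal.ofReal (ut y) ∂(m x)) ∂ν := by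
    rw [← lintegral_add_compl
      (fun x => ENNReal.ofReal (φt x) * (∫⁻ y, ENNReal.ofReal (ut y) ∂(m x))) hΩ]
    have hz : ∫⁻ x in Ωᶜ, ENNReal.ofReal (φt x) * (∫⁻ y, ENNReal.ofReal (ut y) ∂(m x)) ∂ν
        = 0 := by
      have h0 : ∀ᵐ x ∂(ν.restrict Ωᶜ),
          ENNReal.ofReal (φt x) * (∫⁻ y, ENNReal.ofReal (ut y) ∂(m x)) = 0 := by
        refine (ae_restrict_iff' hΩ.compl).mpr ?_
        filter_upwards [hφt_off] with x h1 hx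
        rw [h1 hx]; simp
      rw [lintegral_congr_ae h0, lintegral_zero]
    rw [hz, add_zero]
  have hsplitR : ∫⁻ x, ENNReal.ofReal (ut x) * (∫⁻ y, ENNReal.ofReal (φt y) ∂(m x)) ∂ν
      = ∫⁻ x in Ω, ENNReal.ofReal (ut x) * (∫⁻ y, ENNReal.ofReal (φt y) ∂(m x)) ∂ν := by
    rw [← lintegral_add_compl
      (fun x => ENNReal.ofReal (ut x) * (∫⁻ y, ENNReal.ofReal (φt y) ∂(m x))) hΩ]
    have hz : ∫⁻ x in Ωᶜ, ENNReal.ofReal (ut x) * (∫⁻ y, ENNReal.ofReal (φt y) ∂(m x)) ∂ν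
        = 0 := by
      have h0 : ∀ᵐ x ∂(ν.restrict Ωᶜ),
          ENNReal.ofReal (ut x) * (∫⁻ y, ENNReal.ofReal (φt y) ∂(m x)) = 0 := by
        refine (ae_restrict_iff' hΩ.compl).mpr ?_
        filter_upwards [hut_off] with x h1 hx
        rw [h1 hx]; simp
      rw [lintegral_congr_ae h0, lintegral_zero]
    rw [hz, add_zero]
  -- the auxiliary continuous version of f
  set g : ℝ → ℝ := fun s => f (max s 0) with hgdef
  have hgcont : Continuous g :=
    hfc.comp_continuous (continuous_id.max continuous_const)
      (fun s => Set.mem_Ici.mpr (le_max_right _ _))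
  have hgmeas : Measurable g := hgcont.measurable
  -- the three key integrands over Ω
  set F1 : X → ℝ≥0∞ := fun x => ENNReal.ofReal (φ x * u x) with hF1def
  set F2 : X → ℝ≥0∞ := fun x => ENNReal.ofReal (l * (φ x * g (u x))) with hF2def
  set F3 : X → ℝ≥0∞ := fun x => ENNReal.ofReal (lam * (φ x * u x)) with hF3def
  have hF1meas : Measurable F1 := (hφmeas.mul humeas).ennreal_ofReal
  have hF2meas : Measurable F2 :=
    (measurable_const.mul (hφmeas.mul (hgmeas.comp humeas))).ennreal_ofReal
  have hF3meas : Measurable F3 :=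
    (measurable_const.mul (hφmeas.mul humeas)).ennreal_ofReal
  set P := ∫⁻ x in Ω, F1 x ∂ν with hPdef
  set Q := ∫⁻ x in Ω, F2 x ∂ν with hQdef
  have hφt_eqΩ : ∀ᵐ x ∂(ν.restrict Ω), φt x = φ x :=
    hφt_eq.filter_mono (ae_mono Measure.restrict_le_self)
  have hut_eqΩ : ∀ᵐ x ∂(ν.restrict Ω), ut x = u x :=
    hut_eq.filter_mono (ae_mono Measure.restrict_le_self)
  -- pointwise a.e. facts needed repeatedly
  have hgu : ∀ᵐ x ∂(ν.restrict Ω), g (u x) = f (u x) := by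
    filter_upwards [bundle] with x hx
    rw [hgdef]; simp only [max_eq_left hx.1.1]
  have hF2leF1 : F2 ≤ᵐ[ν.restrict Ω] F1 := by
    filter_upwards [bundle, hgu] with x hx hgx
    have hφx0 : 0 ≤ φ x := le_trans hst.halphaPos.le hx.1.2.1
    simp only [hF2def, hF1def]
    refine ENNReal.ofReal_le_ofReal ?_
    rw [hgx]
    nlinarith [mul_nonneg hφx0 hx.2.2.1]
  have hF3leF1 : F3 ≤ᵐ[ν.restrict Ω] F1 := by
    filter_upwards [bundle] with x hx
    have hφx0 : 0 ≤ φ x := le_trans hst.halphaPos.le hx.1.2.1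
    simp only [hF3def, hF1def]
    refine ENNReal.ofReal_le_ofReal ?_
    nlinarith [mul_nonneg hx.1.1 hx.2.2.2.1]
  -- P is finite
  haveI : IsFiniteMeasure (ν.restrict (mClosure m Ω)) :=
    ⟨by rw [Measure.restrict_apply_univ]; exact hst.hfin⟩
  have hL1 : Integrable u (ν.restrict (mClosure m Ω)) :=
    huL2.integrable (by norm_num)
  have hlintu_ne : (∫⁻ x in Ω, ENNReal.ofReal (u x) ∂ν) ≠ ⊤ := by
    have h1 : (∫⁻ x in mClosure m Ω, ENNReal.ofReal (u x) ∂ν) < ⊤ :=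
      hL1.lintegral_lt_top
    have h2 : (∫⁻ x in Ω, ENNReal.ofReal (u x) ∂ν)
        ≤ ∫⁻ x in mClosure m Ω, ENNReal.ofReal (u x) ∂ν :=
      lintegral_mono' (Measure.restrict_mono Set.subset_union_left le_rfl) le_rfl
    exact (lt_of_le_of_lt h2 h1).ne
  have hPne : P ≠ ⊤ := by
    have hb : ∀ᵐ x ∂(ν.restrict Ω), F1 x ≤ ENNReal.ofReal M * ENNReal.ofReal (u x) := by
      filter_upwards [bundle] with x hx
      simp only [hF1def]
      rw [← ENNReal.ofReal_mul hM0]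
      exact ENNReal.ofReal_le_ofReal (mul_le_mul_of_nonneg_right hx.1.2.2 hx.1.1)
    refine ne_top_of_le_ne_top ?_ (lintegral_mono_ae hb)
    rw [lintegral_const_mul' _ _ ENNReal.ofReal_ne_top]
    exact ENNReal.mul_ne_top ENNReal.ofReal_ne_top hlintu_ne
  have hQleP : Q ≤ P := lintegral_mono_ae hF2leF1
  have hQne : Q ≠ ⊤ := ne_top_of_le_ne_top hPne hQleP
  have hRne : (∫⁻ x in Ω, F3 x ∂ν) ≠ ⊤ :=
    ne_top_of_le_ne_top hPne (lintegral_mono_ae hF3leF1)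
  -- the two sides of partA over Ω
  have hLΩ : ∫⁻ x in Ω, ENNReal.ofReal (φt x) * (∫⁻ y, ENNReal.ofReal (ut y) ∂(m x)) ∂ν
      = P - Q := by
    have h1 : ∫⁻ x in Ω, ENNReal.ofReal (φt x) * (∫⁻ y, ENNReal.ofReal (ut y) ∂(m x)) ∂ν
        = ∫⁻ x in Ω, (F1 x - F2 x) ∂ν := by
      refine lintegral_congr_ae ?_
      filter_upwards [bundle, hφt_eqΩ, hgu] with x hx hφtx hgx
      have hφx0 : 0 ≤ φ x := le_trans hst.halphaPos.le hx.1.2.1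
      have hfux : 0 ≤ f (u x) := le_trans hf0.le hx.2.2.2.2
      simp only [hF1def, hF2def]
      rw [hφtx, hx.2.1.1, ← ENNReal.ofReal_mul hφx0, hgx,
        ← ENNReal.ofReal_sub _ (mul_nonneg hl.le (mul_nonneg hφx0 hfux))]
      congr 1
      ring
    rw [h1]
    exact lintegral_sub' hF2meas.aemeasurable hQne hF2leF1
  have hRΩ : ∫⁻ x in Ω, ENNReal.ofReal (ut x) * (∫⁻ y, ENNReal.ofReal (φt y) ∂(m x)) ∂ν
      = P - ∫⁻ x in Ω, F3 x ∂ν := by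
    have h1 : ∫⁻ x in Ω, ENNReal.ofReal (ut x) * (∫⁻ y, ENNReal.ofReal (φt y) ∂(m x)) ∂ν
        = ∫⁻ x in Ω, (F1 x - F3 x) ∂ν := by
      refine lintegral_congr_ae ?_
      filter_upwards [bundle, hut_eqΩ] with x hx hutx
      have hφx0 : 0 ≤ φ x := le_trans hst.halphaPos.le hx.1.2.1
      simp only [hF1def, hF3def]
      rw [hutx, hx.2.1.2, ← ENNReal.ofReal_mul hx.1.1,
        ← ENNReal.ofReal_sub _ (mul_nonneg hst.hlamPos.le (mul_nonneg hφx0 hx.1.1))]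
      congr 1
      ring
    rw [h1]
    exact lintegral_sub' hF3meas.aemeasurable hRne hF3leF1
  -- conclude Q = ∫⁻ F3
  have hQR : Q = ∫⁻ x in Ω, F3 x ∂ν := by
    have h1 : P - Q = P - ∫⁻ x in Ω, F3 x ∂ν := by
      rw [← hLΩ, ← hRΩ, ← hsplitL, ← hsplitR]
      exact partA
    calc Q = P - (P - Q) := (ENNReal.sub_sub_cancel hPne hQleP).symm
      _ = P - (P - ∫⁻ x in Ω, F3 x ∂ν) := by rw [h1]
      _ = ∫⁻ x in Ω, F3 x ∂ν := ENNReal.sub_sub_cancel hPne (lintegral_mono_ae hF3leF1)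
  -- F3 integral equals lam * P
  have hF3P : (∫⁻ x in Ω, F3 x ∂ν) = ENNReal.ofReal lam * P := by
    have h0 : ∀ x, F3 x = ENNReal.ofReal lam * F1 x := by
      intro x
      simp only [hF3def, hF1def]
      rw [ENNReal.ofReal_mul hst.hlamPos.le]
    simp_rw [h0]
    exact lintegral_const_mul' _ _ ENNReal.ofReal_ne_top
  -- lower bound for Q
  have hQlow : ENNReal.ofReal (l * c₁) * P ≤ Q := by
    have hb : ∀ᵐ x ∂(ν.restrict Ω), ENNReal.ofReal (l * c₁) * F1 x ≤ F2 x := by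
      filter_upwards [bundle, hgu] with x hx hgx
      have hφx0 : 0 ≤ φ x := le_trans hst.halphaPos.le hx.1.2.1
      simp only [hF1def, hF2def]
      rw [← ENNReal.ofReal_mul (mul_nonneg hl.le hc1.le)]
      refine ENNReal.ofReal_le_ofReal ?_
      rw [hgx]
      nlinarith [hfge (u x) hx.1.1, mul_nonneg (mul_nonneg hl.le hφx0)
        (sub_nonneg.mpr (hfge (u x) hx.1.1))]
    calc ENNReal.ofReal (l * c₁) * P = ∫⁻ x in Ω, ENNReal.ofReal (l * c₁) * F1 x ∂ν :=
          (lintegral_const_mul' _ _ ENNReal.ofReal_ne_top).symm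
      _ ≤ Q := lintegral_mono_ae hb
  -- P is nonzero
  have hP0 : P ≠ 0 := by
    intro hP
    have hQ0 : Q = 0 := by rw [hQR, hF3P, hP, mul_zero]
    have hb : ∀ᵐ x ∂(ν.restrict Ω), ENNReal.ofReal (l * (α * f 0)) ≤ F2 x := by
      filter_upwards [bundle, hgu] with x hx hgx
      have hφx0 : 0 ≤ φ x := le_trans hst.halphaPos.le hx.1.2.1
      simp only [hF2def]
      refine ENNReal.ofReal_le_ofReal ?_
      rw [hgx]
      have h1 : α * f 0 ≤ φ x * f (u x) :=
        mul_le_mul hx.1.2.1 hx.2.2.2.2 hf0.le hφx0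
      nlinarith
    have hQpos : 0 < Q := by
      have h1 : ENNReal.ofReal (l * (α * f 0)) * ν Ω ≤ Q := by
        calc ENNReal.ofReal (l * (α * f 0)) * ν Ω
            = ∫⁻ _ in Ω, ENNReal.ofReal (l * (α * f 0)) ∂ν := by
              rw [setLIntegral_const]
          _ ≤ Q := lintegral_mono_ae hb
      refine lt_of_lt_of_le ?_ h1
      refine ENNReal.mul_pos ?_ hst.hpos.ne'
      rw [ne_eq, ENNReal.ofReal_eq_zero, not_le]
      exact mul_pos hl (mul_pos hst.halphaPos hf0)
    rw [hQ0] at hQpos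
    exact lt_irrefl 0 hQpos
  -- final inequality
  have hfinal : ENNReal.ofReal (l * c₁) * P ≤ ENNReal.ofReal lam * P := by
    rw [← hF3P, ← hQR]; exact hQlow
  have h1 : ENNReal.ofReal (l * c₁) ≤ ENNReal.ofReal lam := by
    rw [mul_comm (ENNReal.ofReal (l * c₁)) P, mul_comm (ENNReal.ofReal lam) P] at hfinal
    exact (ENNReal.mul_le_mul_iff_right hP0 hPne).mp hfinal
  have h2 : l * c₁ ≤ lam := (ENNReal.ofReal_le_ofReal_iff hst.hlamPos.le).mp h1
  rw [le_div_iff₀ hc1]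
  exact h2
end

section
/- Sublinear nonlinearities give λ* = +∞: Under the standing assumptions, let f ∈ C¹([0,∞)) be non-decreasing with f(0) > 0, and assume that for every n ∈ ℕ there exists s_n ≥ 0 with f(s_n) ≤ s_n/n. Then for every λ > 0 the problem (P(λf)) admits a bounded solution; i.e., the extremal parameter λ* = +∞. -/
open MeasureTheory Set

section AuxSublinear

open ProbabilityTheory

variable {X : Type*} [MeasurableSpace X] {m : X → MeasureTheory.Measure X}
  {ν : MeasureTheory.Measure X}

lemma integrable_of_abs_bound {μ : Measure X} [IsFiniteMeasure μ] {g : X → ℝ}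
    (hg : Measurable g) {C : ℝ} (h : ∀ x, |g x| ≤ C) : Integrable g μ :=
  (integrable_const C).mono' hg.aestronglyMeasurable
    (Filter.Eventually.of_forall fun x => by simpa [Real.norm_eq_abs] using h x)

lemma measurable_integral_rw (hrw : IsRandomWalk m) {g : X → ℝ} (hg : Measurable g) :
    Measurable fun x => ∫ y, g y ∂ m x := by
  let κ : ProbabilityTheory.Kernel X X :=
    ⟨m, Measure.measurable_of_measurable_coe m fun A hA => hrw.2 A hA⟩
  haveI : IsMarkovKernel κ := ⟨fun x => hrw.1 x⟩
  have h := MeasureTheory.StronglyMeasurable.integral_kernel_prod_right (κ := κ)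
    (f := fun _ y => g y) ((hg.comp measurable_snd).stronglyMeasurable)
  exact h.measurable

lemma null_push (hrw : IsRandomWalk m) (hrev : Reversible m ν) {Ω A : Set X}
    (hΩ : MeasurableSet Ω) (hΩfin : ν Ω < ⊤) (hA : MeasurableSet A) (hA0 : ν A = 0) :
    ν {x | x ∈ Ω ∧ 0 < m x A} = 0 := by
  haveI : ∀ x, IsProbabilityMeasure (m x) := hrw.1
  set F : X → X → ℝ := fun x y =>
    Ω.indicator (fun _ => (1:ℝ)) x * A.indicator (fun _ => (1:ℝ)) y with hF
  have hFm : Measurable (Function.uncurry F) := by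
    have h1 : Measurable fun p : X × X => Ω.indicator (fun _ => (1:ℝ)) p.1 :=
      (measurable_const.indicator hΩ).comp measurable_fst
    have h2 : Measurable fun p : X × X => A.indicator (fun _ => (1:ℝ)) p.2 :=
      (measurable_const.indicator hA).comp measurable_snd
    exact h1.mul h2
  have hFb : ∀ x y, |F x y| ≤ 1 := by
    intro x y
    by_cases hx : x ∈ Ω <;> by_cases hy : y ∈ A <;> simp [hF, hx, hy]
  have heq := hrev F hFm ⟨1, hFb⟩
  have hinner1 : ∀ x, (∫ y, F x y ∂ m x) = Ω.indicator (fun _ => (1:ℝ)) x * (m x A).toReal := by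
    intro x
    rw [integral_const_mul, integral_indicator_const _ hA]
    simp [smul_eq_mul, Measure.real]
  have hinner2 : ∀ x, (∫ y, F y x ∂ m x) = A.indicator (fun _ => (1:ℝ)) x * (m x Ω).toReal := by
    intro x
    have hcomm : ∀ y, F y x = A.indicator (fun _ => (1:ℝ)) x * Ω.indicator (fun _ => (1:ℝ)) y :=
      fun y => mul_comm _ _
    simp_rw [hcomm]
    rw [integral_const_mul, integral_indicator_const _ hΩ]
    simp [smul_eq_mul, Measure.real]
  have hRHS : (∫ x, (∫ y, F y x ∂ m x) ∂ν) = 0 := by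
    rw [integral_eq_zero_of_ae]
    have : ∀ᵐ x ∂ν, x ∉ A := by
      rw [ae_iff]; simpa using hA0
    filter_upwards [this] with x hx
    simp [hinner2, Set.indicator_of_notMem hx]
  set g : X → ℝ := fun x => Ω.indicator (fun _ => (1:ℝ)) x * (m x A).toReal with hg
  have hgm : Measurable g :=
    (measurable_const.indicator hΩ).mul ((hrw.2 A hA).ennreal_toReal)
  have hgint : Integrable g ν := by
    refine (Integrable.mono' (g := Ω.indicator fun _ => (1:ℝ)) ?_ hgm.aestronglyMeasurable ?_)
    · rw [integrable_indicator_iff hΩ]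
      exact integrableOn_const hΩfin.ne
    · refine Filter.Eventually.of_forall fun x => ?_
      by_cases hx : x ∈ Ω
      · simp only [hg, Set.indicator_of_mem hx, one_mul, Real.norm_eq_abs]
        rw [abs_of_nonneg ENNReal.toReal_nonneg]
        exact ENNReal.toReal_le_of_le_ofReal zero_le_one (by simpa using prob_le_one)
      · simp [hg, Set.indicator_of_notMem hx]
  have hgnn : 0 ≤ g := fun x => by
    by_cases hx : x ∈ Ω <;>
      simp [hg, Set.indicator_of_mem, Set.indicator_of_notMem, hx, ENNReal.toReal_nonneg]
  have hg0 : (∫ x, g x ∂ν) = 0 := by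
    have := heq.trans hRHS
    rw [← this]
    exact integral_congr_ae (Filter.Eventually.of_forall fun x => (hinner1 x).symm)
  have hgae : g =ᵐ[ν] 0 := (integral_eq_zero_iff_of_nonneg hgnn hgint).mp hg0
  have hnull : ν {x | g x ≠ 0} = 0 := by
    have h := hgae
    rw [Filter.EventuallyEq, ae_iff] at h
    simpa using h
  refine measure_mono_null (fun x hx => ?_) hnull
  obtain ⟨hxΩ, hxA⟩ := hx
  show g x ≠ 0
  simp only [hg, Set.indicator_of_mem hxΩ, one_mul]
  exact ne_of_gt (ENNReal.toReal_pos (ne_of_gt hxA) (measure_ne_top _ _))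

lemma hereditary_null (hrw : IsRandomWalk m) (hrev : Reversible m ν) {Ω N₀ : Set X}
    (hΩ : MeasurableSet Ω) (hΩfin : ν Ω < ⊤) (hN₀m : MeasurableSet N₀) (hN₀0 : ν N₀ = 0) :
    ∃ N : Set X, MeasurableSet N ∧ ν N = 0 ∧ N₀ ⊆ N ∧
      ∀ x, x ∈ Ω → x ∉ N → m x N = 0 := by
  let Nseq : ℕ → Set X := fun j =>
    Nat.rec N₀ (fun _ Nj => Nj ∪ {x | x ∈ Ω ∧ 0 < m x Nj}) j
  have hseq : ∀ j, MeasurableSet (Nseq j) ∧ ν (Nseq j) = 0 := by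
    intro j
    induction j with
    | zero => exact ⟨hN₀m, hN₀0⟩
    | succ j ih =>
      have hm2 : MeasurableSet {x | x ∈ Ω ∧ 0 < m x (Nseq j)} := by
        have := measurableSet_lt (measurable_const (a := (0 : ENNReal))) (hrw.2 _ ih.1)
        exact hΩ.inter this
      exact ⟨ih.1.union hm2, measure_union_null ih.2 (null_push hrw hrev hΩ hΩfin ih.1 ih.2)⟩
  refine ⟨⋃ j, Nseq j, MeasurableSet.iUnion fun j => (hseq j).1,
    measure_iUnion_null fun j => (hseq j).2, subset_iUnion Nseq 0, ?_⟩
  intro x hxΩ hxN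
  refine measure_iUnion_null fun j => ?_
  have hx' : x ∉ Nseq (j + 1) := fun h => hxN (mem_iUnion.mpr ⟨j + 1, h⟩)
  have : ¬ (x ∈ Ω ∧ 0 < m x (Nseq j)) := fun h => hx' (Or.inr h)
  by_contra hne
  exact this ⟨hxΩ, pos_iff_ne_zero.mpr hne⟩

end AuxSublinear

/-- The monotone iteration scheme used to build a solution. -/
noncomputable def iterSeq {X : Type*} [MeasurableSpace X] (m : X → MeasureTheory.Measure X)
    (Ω : Set X) (l B : ℝ) (fc : ℝ → ℝ) : ℕ → X → ℝ
  | 0 => fun _ => 0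
  | (k+1) => fun x => Ω.indicator (fun z =>
      min B ((∫ y, iterSeq m Ω l B fc k y ∂ m z) + l * fc (iterSeq m Ω l B fc k z))) x

/-- **Sublinear nonlinearities give `λ* = +∞`**: if `f ∈ C¹([0,∞))` is non-decreasing with
`f(0) > 0` and for every `n ≥ 1` there is `s_n ≥ 0` with `f(s_n) ≤ s_n/n`, then for every
`λ > 0` the problem `(P(λ f))` has a bounded solution. -/
theorem sublinear_lamStar_infinite
    {X : Type*} [MeasurableSpace X] [MeasurableSpace.CountablyGenerated X]
    (m : X → MeasureTheory.Measure X) (ν : MeasureTheory.Measure X)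
    (Ω : Set X) (lam : ℝ) (φ : X → ℝ) (α M : ℝ)
    (hst : Standing m ν Ω lam φ α M)
    (f : ℝ → ℝ) (hC1 : ContDiffOn ℝ 1 f (Set.Ici 0))
    (hmono : MonotoneOn f (Set.Ici 0)) (hf0 : 0 < f 0)
    (hsub : ∀ n : ℕ, 0 < n → ∃ s : ℝ, 0 ≤ s ∧ f s ≤ s / n) :
    ∀ l : ℝ, 0 < l → ∃ u : X → ℝ, IsSol m ν Ω l f u ∧ IsBdd ν (mClosure m Ω) u := by
  intro l hl
  classical
  -- basic facts
  have hrw := hst.hrw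
  have hprob : ∀ x, IsProbabilityMeasure (m x) := hrw.1
  have hmeasΩ := hst.hmeasΩ
  have hMpos : (0:ℝ) < M := lt_of_lt_of_le hst.halphaPos hst.halphaM
  have hαpos := hst.halphaPos
  have hlam := hst.hlamPos
  have hbm : MeasurableSet (mBoundary m Ω) := by
    have h1 : MeasurableSet {x | 0 < m x Ω} :=
      measurableSet_lt measurable_const (hrw.2 Ω hmeasΩ)
    exact hmeasΩ.compl.inter h1
  have hclosm : MeasurableSet (mClosure m Ω) := hmeasΩ.union hbm
  have hΩfin : ν Ω < ⊤ :=
    lt_of_le_of_lt (measure_mono (Set.subset_union_left)) hst.hfin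
  -- choice of constants
  set n₀ : ℕ := ⌈l * M / (lam * α)⌉₊ + 1 with hn₀
  have hn₀pos : (0:ℝ) < n₀ := by positivity
  obtain ⟨s, hs0, hfs⟩ := hsub n₀ (Nat.succ_pos _)
  have hf0s : f 0 ≤ f s := hmono (Set.self_mem_Ici) (Set.mem_Ici.mpr hs0) hs0
  have hspos : 0 < s := by
    have h1 : 0 < s / n₀ := lt_of_lt_of_le hf0 (le_trans hf0s hfs)
    rcases div_pos_iff.mp h1 with ⟨h, _⟩ | ⟨_, h⟩
    · exact h
    · exact absurd hn₀pos (not_lt.mpr h.le)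
  set t : ℝ := s / M with ht
  have htpos : 0 < t := div_pos hspos hMpos
  have htM : t * M = s := div_mul_cancel₀ s (ne_of_gt hMpos)
  have hkey : l * M ≤ n₀ * (lam * α) := by
    have h1 : l * M / (lam * α) ≤ (n₀ : ℝ) := by
      refine (Nat.le_ceil _).trans ?_
      exact_mod_cast Nat.le_succ _
    have h2 : 0 < lam * α := mul_pos hlam hαpos
    calc l * M = l * M / (lam * α) * (lam * α) := by field_simp
      _ ≤ n₀ * (lam * α) := by nlinarith
  have hkeynum : l * (s / n₀) ≤ t * lam * α := by
    have h2 : t * lam * α = s * (lam * α) / M := by rw [ht]; ring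
    have h3 : l * (s / n₀) = l * s / n₀ := by ring
    rw [h2, h3, div_le_div_iff₀ hn₀pos hMpos]
    nlinarith [hspos, hkey]
  -- the continuous extension of f
  set fc : ℝ → ℝ := fun r => f (max r 0) with hfc
  have hfc_cont : Continuous fc :=
    hC1.continuousOn.comp_continuous (continuous_id.max continuous_const)
      (fun r => Set.mem_Ici.mpr (le_max_right r 0))
  have hfc_mono : Monotone fc := fun a b hab =>
    hmono (Set.mem_Ici.mpr (le_max_right a 0)) (Set.mem_Ici.mpr (le_max_right b 0))
      (max_le_max hab le_rfl)
  have hfc_eq : ∀ r, 0 ≤ r → fc r = f r := fun r hr => by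
    simp [hfc, max_eq_left hr]
  have hfc_pos : ∀ r, 0 < fc r := fun r =>
    lt_of_lt_of_le hf0 (hmono Set.self_mem_Ici (Set.mem_Ici.mpr (le_max_right r 0))
      (le_max_right r 0))
  have hfc_meas : Measurable fc := hfc_cont.measurable
  -- the iteration
  set U : ℕ → X → ℝ := iterSeq m Ω l s fc with hU
  have hUsucc : ∀ k x, U (k+1) x = Ω.indicator (fun z =>
      min s ((∫ y, U k y ∂ m z) + l * fc (U k z))) x := fun k x => rfl
  have hU0 : ∀ x, U 0 x = 0 := fun x => rfl
  have hUmeas : ∀ k, Measurable (U k) := by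
    intro k
    induction k with
    | zero => exact measurable_const
    | succ k ih =>
      exact ((measurable_const.min ((measurable_integral_rw hrw ih).add
        (measurable_const.mul (hfc_meas.comp ih)))).indicator hmeasΩ)
  have hUnn : ∀ k x, 0 ≤ U k x := by
    intro k
    induction k with
    | zero => intro x; simp [hU0]
    | succ k ih =>
      intro x
      rw [hUsucc]
      by_cases hx : x ∈ Ω
      · rw [Set.indicator_of_mem hx]
        haveI := hprob x
        refine le_min hspos.le ?_
        have h1 : 0 ≤ ∫ y, U k y ∂ m x := integral_nonneg fun y => ih y
        have h2 : 0 ≤ l * fc (U k x) := mul_nonneg hl.le (hfc_pos _).le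
        linarith
      · rw [Set.indicator_of_notMem hx]
  have hUub : ∀ k x, U k x ≤ s := by
    intro k x
    cases k with
    | zero => simpa [hU0] using hspos.le
    | succ k =>
      rw [hUsucc]
      by_cases hx : x ∈ Ω
      · rw [Set.indicator_of_mem hx]; exact min_le_left _ _
      · rw [Set.indicator_of_notMem hx]; exact hspos.le
  have hUabs : ∀ k x, |U k x| ≤ s := fun k x =>
    abs_le.mpr ⟨by linarith [hUnn k x, hspos], hUub k x⟩
  have hUint : ∀ k x, Integrable (U k) (m x) := by
    intro k x
    haveI := hprob x
    exact integrable_of_abs_bound (hUmeas k) (fun y => hUabs k y)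
  have hUzero : ∀ k x, x ∉ Ω → U k x = 0 := by
    intro k x hx
    cases k with
    | zero => exact hU0 x
    | succ k => rw [hUsucc, Set.indicator_of_notMem hx]
  have hUmono : ∀ k x, U k x ≤ U (k+1) x := by
    intro k
    induction k with
    | zero => intro x; rw [hU0]; exact hUnn 1 x
    | succ k ih =>
      intro x
      rw [hUsucc, hUsucc]
      by_cases hx : x ∈ Ω
      · rw [Set.indicator_of_mem hx, Set.indicator_of_mem hx]
        haveI := hprob x
        refine min_le_min le_rfl (add_le_add ?_ ?_)
        · exact integral_mono (hUint k x) (hUint (k+1) x) (fun y => ih y)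
        · exact mul_le_mul_of_nonneg_left (hfc_mono (ih x)) hl.le
      · rw [Set.indicator_of_notMem hx, Set.indicator_of_notMem hx]
  -- the limit function
  set u : X → ℝ := fun x => ⨆ k, U k x with hu
  have hbddu : ∀ x, BddAbove (Set.range fun k => U k x) :=
    fun x => ⟨s, fun r ⟨k, hk⟩ => hk ▸ hUub k x⟩
  have hmonoSeq : ∀ x, Monotone fun k => U k x :=
    fun x => monotone_nat_of_le_succ fun k => hUmono k x
  have htend : ∀ x, Filter.Tendsto (fun k => U k x) Filter.atTop (nhds (u x)) :=
    fun x => tendsto_atTop_ciSup (hmonoSeq x) (hbddu x)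
  have hunn : ∀ x, 0 ≤ u x := fun x => by
    have := le_ciSup (hbddu x) 0
    simpa [hU0] using this
  have huub : ∀ x, u x ≤ s := fun x => ciSup_le fun k => hUub k x
  have huabs : ∀ x, |u x| ≤ s := fun x => abs_le.mpr ⟨by linarith [hunn x, hspos], huub x⟩
  have huzero : ∀ x, x ∉ Ω → u x = 0 := by
    intro x hx
    have h1 : (fun k => U k x) = fun _ => (0:ℝ) := funext fun k => hUzero k x hx
    rw [hu]
    show (⨆ k, U k x) = 0
    rw [h1]
    exact ciSup_const
  have humeas : Measurable u := Measurable.iSup hUmeas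
  have huint : ∀ x, Integrable u (m x) := by
    intro x
    haveI := hprob x
    exact integrable_of_abs_bound humeas (fun y => huabs y)
  -- the exceptional null set
  have haeP : ∀ᵐ x ∂(ν.restrict Ω), α ≤ φ x ∧ φ x ≤ M ∧ -(deltaM m φ x) = lam * φ x :=
    hst.hphiLB.and (hst.hphiUB.and hst.heig)
  have haeP' : (ν.restrict Ω)
      {x | ¬ (α ≤ φ x ∧ φ x ≤ M ∧ -(deltaM m φ x) = lam * φ x)} = 0 := by
    rw [ae_iff] at haeP; exact haeP
  obtain ⟨Tset, hTsub, hTm, hT0r⟩ := exists_measurable_superset_of_null haeP'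
  have hT0 : ν (Tset ∩ Ω) = 0 := by
    rw [← Measure.restrict_apply hTm]; exact hT0r
  have haeQ' : (ν.restrict (mBoundary m Ω)) {x | ¬ φ x = 0} = 0 := by
    have h := hst.hphiMem.2.2.1
    rw [ae_iff] at h; exact h
  obtain ⟨Tset', hT'sub, hT'm, hT'0r⟩ := exists_measurable_superset_of_null haeQ'
  have hT'0 : ν (Tset' ∩ mBoundary m Ω) = 0 := by
    rw [← Measure.restrict_apply hT'm]; exact hT'0r
  have hN₀m : MeasurableSet ((Tset ∩ Ω) ∪ (Tset' ∩ mBoundary m Ω)) :=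
    (hTm.inter hmeasΩ).union (hT'm.inter hbm)
  obtain ⟨N, hNm, hN0, hN₀N, hNpush⟩ := hereditary_null hrw hst.hrev hmeasΩ hΩfin hN₀m
    (measure_union_null hT0 hT'0)
  -- pointwise facts at good points
  have hgoodΩ : ∀ x, x ∈ Ω → x ∉ N →
      α ≤ φ x ∧ φ x ≤ M ∧ -(deltaM m φ x) = lam * φ x := by
    intro x hx hxN
    by_contra hcon
    exact hxN (hN₀N (Or.inl ⟨hTsub hcon, hx⟩))
  have hφzero : ∀ z, z ∉ N → z ∉ Ω → φ z = 0 := by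
    intro z hzN hzΩ
    by_cases hzb : z ∈ mBoundary m Ω
    · by_contra hcon
      exact hzN (hN₀N (Or.inr ⟨hT'sub hcon, hzb⟩))
    · exact hst.hphiMem.2.2.2 z (fun h => h.elim hzΩ hzb)
  have hφsup : ∀ x, x ∈ Ω → x ∉ N →
      Integrable φ (m x) ∧ (∫ y, φ y ∂ m x) = φ x - lam * φ x := by
    intro x hx hxN
    haveI := hprob x
    obtain ⟨h1, h2, h3⟩ := hgoodΩ x hx hxN
    have hδ : deltaM m φ x = -(lam * φ x) := by linarith
    have hne : deltaM m φ x ≠ 0 := by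
      rw [hδ]
      exact neg_ne_zero.mpr (ne_of_gt (mul_pos hlam (lt_of_lt_of_le hαpos h1)))
    have hint' : Integrable (fun y => φ y - φ x) (m x) := by
      by_contra hcon
      exact hne (integral_undef hcon)
    have hφint : Integrable φ (m x) := by
      have hadd := hint'.add (integrable_const (φ x))
      have h2 : ((fun y => φ y - φ x) + fun _ => φ x) = φ := funext fun y => by
        simp
      rwa [h2] at hadd
    refine ⟨hφint, ?_⟩
    have hδ2 : deltaM m φ x = (∫ y, φ y ∂ m x) - φ x := by
      show (∫ y, (φ y - φ x) ∂ m x) = _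
      rw [integral_sub hφint (integrable_const _), integral_const]
      simp
    linarith
  -- the core inequality
  have hAB : ∀ k x, x ∈ Ω → x ∉ N → (∀ z, z ∉ N → U k z ≤ t * φ z) →
      (∫ y, U k y ∂ m x) + l * fc (U k x) ≤ t * φ x := by
    intro k x hx hxN hIH
    haveI := hprob x
    obtain ⟨h1, h2, _⟩ := hgoodΩ x hx hxN
    obtain ⟨hφi, hφeq⟩ := hφsup x hx hxN
    have hmN : m x N = 0 := hNpush x hx hxN
    have haeN : ∀ᵐ y ∂ m x, y ∉ N := by
      rw [ae_iff]; simpa using hmN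
    have step1 : (∫ y, U k y ∂ m x) ≤ ∫ y, t * φ y ∂ m x := by
      refine integral_mono_ae (hUint k x) (hφi.const_mul t) ?_
      filter_upwards [haeN] with y hy
      exact hIH y hy
    have step1' : (∫ y, t * φ y ∂ m x) = t * (φ x - lam * φ x) := by
      rw [integral_const_mul, hφeq]
    have hUx : U k x ≤ t * φ x := hIH x hxN
    have step2 : fc (U k x) ≤ f s := by
      rw [hfc_eq _ (hUnn k x)]
      have ha : U k x ≤ t * φ x := hUx
      have hb : t * φ x ≤ s := by
        rw [← htM]
        exact mul_le_mul_of_nonneg_left h2 htpos.le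
      have hc : f (U k x) ≤ f s :=
        hmono (Set.mem_Ici.mpr (hUnn k x)) (Set.mem_Ici.mpr hs0) (le_trans ha hb)
      exact hc
    have step3 : l * fc (U k x) ≤ t * lam * φ x := by
      have h4 : l * fc (U k x) ≤ l * f s := mul_le_mul_of_nonneg_left step2 hl.le
      have h5 : l * f s ≤ l * (s / n₀) := mul_le_mul_of_nonneg_left hfs hl.le
      have h6 : t * lam * α ≤ t * lam * φ x :=
        mul_le_mul_of_nonneg_left h1 (mul_nonneg htpos.le hlam.le)
      linarith [hkeynum]
    calc (∫ y, U k y ∂ m x) + l * fc (U k x)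
        ≤ t * (φ x - lam * φ x) + t * lam * φ x := by linarith [step1, step1']
      _ = t * φ x := by ring
  have hcomp : ∀ k z, z ∉ N → U k z ≤ t * φ z := by
    intro k
    induction k with
    | zero =>
      intro z hzN
      rw [hU0]
      by_cases hz : z ∈ Ω
      · have h1 := (hgoodΩ z hz hzN).1
        nlinarith [htpos, hαpos]
      · rw [hφzero z hzN hz, mul_zero]
    | succ k ih =>
      intro z hzN
      by_cases hz : z ∈ Ω
      · rw [hUsucc, Set.indicator_of_mem hz]
        exact le_trans (min_le_right _ _) (hAB k z hz hzN ih)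
      · rw [hUsucc, Set.indicator_of_notMem hz, hφzero z hzN hz, mul_zero]
  have hglue : ∀ k x, x ∈ Ω → x ∉ N →
      U (k+1) x = (∫ y, U k y ∂ m x) + l * fc (U k x) := by
    intro k x hx hxN
    rw [hUsucc, Set.indicator_of_mem hx]
    refine min_eq_right ?_
    have h1 := hAB k x hx hxN (hcomp k)
    have h2 := (hgoodΩ x hx hxN).2.1
    have h3 : t * φ x ≤ s := by
      rw [← htM]
      exact mul_le_mul_of_nonneg_left h2 htpos.le
    linarith
  -- passing to the limit
  have heqn : ∀ x, x ∈ Ω → x ∉ N → u x = (∫ y, u y ∂ m x) + l * fc (u x) := by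
    intro x hx hxN
    haveI := hprob x
    have h1 : Filter.Tendsto (fun k => U (k+1) x) Filter.atTop (nhds (u x)) :=
      (htend x).comp (Filter.tendsto_add_atTop_nat 1)
    have h2 : Filter.Tendsto (fun k => (∫ y, U k y ∂ m x) + l * fc (U k x)) Filter.atTop
        (nhds ((∫ y, u y ∂ m x) + l * fc (u x))) := by
      refine Filter.Tendsto.add ?_ ?_
      · refine tendsto_integral_of_dominated_convergence (fun _ => s)
          (fun k => (hUmeas k).aestronglyMeasurable) (integrable_const s)
          (fun k => Filter.Eventually.of_forall fun y => ?_)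
          (Filter.Eventually.of_forall fun y => htend y)
        simpa [Real.norm_eq_abs] using hUabs k y
      · exact ((hfc_cont.tendsto (u x)).comp (htend x)).const_mul l
    have h3 : (fun k => U (k+1) x) = fun k => (∫ y, U k y ∂ m x) + l * fc (U k x) :=
      funext fun k => hglue k x hx hxN
    rw [h3] at h1
    exact tendsto_nhds_unique h1 h2
  have hfinal : ∀ x, x ∈ Ω → x ∉ N → -(deltaM m u x) = l * f (u x) := by
    intro x hx hxN
    haveI := hprob x
    have hδ : deltaM m u x = (∫ y, u y ∂ m x) - u x := by
      show (∫ y, (u y - u x) ∂ m x) = _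
      rw [integral_sub (huint x) (integrable_const _), integral_const]
      simp
    have h1 := heqn x hx hxN
    rw [hδ, ← hfc_eq _ (hunn x)]
    linarith
  -- assembling the solution
  haveI : IsFiniteMeasure (ν.restrict (mClosure m Ω)) := by
    constructor
    rw [Measure.restrict_apply_univ]
    exact hst.hfin
  have hmem : MemL20 m ν Ω u := by
    refine ⟨humeas, ?_, ?_, ?_⟩
    · exact MemLp.of_bound humeas.aestronglyMeasurable s
        (Filter.Eventually.of_forall fun x => by
          simpa [Real.norm_eq_abs] using huabs x)
    · filter_upwards [ae_restrict_mem hbm] with x hx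
      exact huzero x hx.1
    · intro x hx
      exact huzero x (fun h => hx (Or.inl h))
  refine ⟨u, ⟨hmem, Filter.Eventually.of_forall fun x => hunn x, ?_⟩,
    ⟨s, Filter.Eventually.of_forall fun x => huabs x⟩⟩
  have hae1 : ∀ᵐ x ∂(ν.restrict Ω), x ∈ Ω := ae_restrict_mem hmeasΩ
  have hae2 : ∀ᵐ x ∂(ν.restrict Ω), x ∉ N :=
    ae_restrict_of_ae (measure_eq_zero_iff_ae_notMem.mp hN0)
  filter_upwards [hae1, hae2] with x hx hxN
  exact hfinal x hx hxN
end
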